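/- arXiv:1607.04989 — 6 statements merged into one kernel-verified Lean document; each statement's English description precedes it below -/
import Mathlib

section
/- Let d ≥ 1 and k ≥ 1, let 𝐒 = {S₁,…,S_N} be a collection of nonempty finite point sets in ℝ^d with weights wᵢ > 0, and take ℱ to be the family of all k-point subsets of ℝ^d (so dist(S,F) = max_{s∈S} min_{f∈F} ‖s−f‖). Then the total sensitivity of 𝐒 satisfies 𝔊 = Σᵢ σ(Sᵢ) ≤ 4k + 3. -/
/-- Max of `f` over a finite set, with value `0` on the empty set. -/
noncomputable def maxVal {α : Type*} (P : Finset α) (f : α → ℝ) : ℝ :=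
  P.fold max 0 f

/-- Generalized distance from a finite point set `S` to a shape `F`:
`max_{s ∈ S} inf_{f ∈ F} ‖s - f‖`. -/
noncomputable def distv {d : ℕ} (S : Finset (EuclideanSpace ℝ (Fin d)))
    (F : Set (EuclideanSpace ℝ (Fin d))) : ℝ :=
  maxVal S (fun x => Metric.infDist x F)

open Metric Finset

lemma le_distv {d : ℕ} {S : Finset (EuclideanSpace ℝ (Fin d))}
    {F : Set (EuclideanSpace ℝ (Fin d))} {s} (hs : s ∈ S) :
    infDist s F ≤ distv S F := by
  unfold distv maxVal; exact (Finset.le_fold_max _).mpr (Or.inr ⟨s, hs, le_rfl⟩)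

lemma distv_nonneg {d : ℕ} {S : Finset (EuclideanSpace ℝ (Fin d))}
    {F : Set (EuclideanSpace ℝ (Fin d))} : 0 ≤ distv S F := by
  unfold distv maxVal; exact (Finset.le_fold_max _).mpr (Or.inl le_rfl)

lemma distv_le {d : ℕ} {S : Finset (EuclideanSpace ℝ (Fin d))}
    {F : Set (EuclideanSpace ℝ (Fin d))} {M : ℝ} (h0 : 0 ≤ M)
    (h : ∀ s ∈ S, infDist s F ≤ M) : distv S F ≤ M := by
  unfold distv maxVal; exact (Finset.fold_max_le _).mpr ⟨h0, h⟩

lemma exists_distv_eq {d : ℕ} {S : Finset (EuclideanSpace ℝ (Fin d))}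
    (F : Set (EuclideanSpace ℝ (Fin d))) (hS : S.Nonempty) :
    ∃ s ∈ S, distv S F = infDist s F := by
  obtain ⟨s, hs, hmax⟩ := S.exists_max_image (fun x => infDist x F) hS
  exact ⟨s, hs, le_antisymm (distv_le infDist_nonneg hmax) (le_distv hs)⟩

lemma exists_nearest {d : ℕ} {F : Finset (EuclideanSpace ℝ (Fin d))}
    (hF : F.Nonempty) (x : EuclideanSpace ℝ (Fin d)) :
    ∃ f ∈ F, infDist x (↑F : Set _) = dist x f :=
  F.finite_toSet.isCompact.exists_infDist_eq_dist (by exact_mod_cast hF) x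

lemma key_sens {d k N : ℕ} (hk : 1 ≤ k)
    (S : Fin N → Finset (EuclideanSpace ℝ (Fin d))) (w : Fin N → ℝ)
    (hS : ∀ i, (S i).Nonempty) (hw : ∀ i, 0 < w i)
    (Fs : Finset (EuclideanSpace ℝ (Fin d))) (hFs : Fs.Nonempty) (hcard : Fs.card ≤ k)
    (t : Fin N → ℝ) (ht0 : ∀ i, 0 ≤ t i) (ht : ∑ i, t i ≤ 2)
    (h1 : ∀ i, ∀ F : Finset (EuclideanSpace ℝ (Fin d)), F.card = k →
      w i * distv (S i) (↑Fs : Set _) ≤ t i * ∑ l, w l * distv (S l) (↑F : Set _))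
    (h2 : ∀ F : Finset (EuclideanSpace ℝ (Fin d)), F.card = k →
      (∑ l, w l * distv (S l) (↑Fs : Set _)) ≤ 2 * ∑ l, w l * distv (S l) (↑F : Set _)) :
    (∑ i, sInf {β : ℝ | 0 ≤ β ∧
        ∀ F : Finset (EuclideanSpace ℝ (Fin d)), F.card = k →
          w i * distv (S i) (↑F : Set _) ≤ β * ∑ l, w l * distv (S l) (↑F : Set _)})
      ≤ 4 * (k : ℝ) + 3 := by
  classical
  set cost : Finset (EuclideanSpace ℝ (Fin d)) → ℝ :=
    fun F => ∑ l, w l * distv (S l) (↑F : Set _) with hcost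
  have costnn : ∀ F, 0 ≤ cost F := fun F =>
    Finset.sum_nonneg fun l _ => mul_nonneg (hw l).le distv_nonneg
  -- clusters
  set C : EuclideanSpace ℝ (Fin d) → Finset (Fin N) :=
    fun c => Finset.univ.filter
      (fun j => ∃ s ∈ S j, dist s c ≤ distv (S j) (↑Fs : Set _)) with hC
  set W : EuclideanSpace ℝ (Fin d) → ℝ := fun c => ∑ j ∈ C c, w j with hW
  have hFsi : ∀ i : Fin N, (Fs.filter (fun c => i ∈ C c)).Nonempty := by
    intro i
    obtain ⟨s, hs⟩ := hS i
    obtain ⟨c, hc, hcd⟩ := exists_nearest hFs s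
    refine ⟨c, Finset.mem_filter.mpr ⟨hc, ?_⟩⟩
    refine Finset.mem_filter.mpr ⟨Finset.mem_univ i, ⟨s, hs, ?_⟩⟩
    rw [← hcd]; exact le_distv hs
  choose m hm1 hm2 using fun i => Finset.exists_min_image _ W (hFsi i)
  have hmFs : ∀ i, m i ∈ Fs := fun i => (Finset.mem_filter.mp (hm1 i)).1
  have hmC : ∀ i, i ∈ C (m i) := fun i => (Finset.mem_filter.mp (hm1 i)).2
  have hWpos : ∀ i, 0 < W (m i) := by
    intro i
    have h := Finset.single_le_sum (f := w) (fun j _ => (hw j).le) (hmC i)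
    have := hw i
    rw [hW]; dsimp only; linarith
  -- averaging bound
  have havg : ∀ (c : EuclideanSpace ℝ (Fin d)) (F : Finset (EuclideanSpace ℝ (Fin d))),
      W c * infDist c (↑F : Set _) ≤ cost Fs + cost F := by
    intro c F
    have hptw : ∀ j ∈ C c, w j * infDist c (↑F : Set _)
        ≤ w j * distv (S j) (↑Fs : Set _) + w j * distv (S j) (↑F : Set _) := by
      intro j hj
      obtain ⟨s, hsj, hsd⟩ := (Finset.mem_filter.mp hj).2
      have tri : infDist c (↑F : Set _) ≤ infDist s (↑F : Set _) + dist c s :=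
        infDist_le_infDist_add_dist
      have h3 : infDist s (↑F : Set _) ≤ distv (S j) (↑F : Set _) := le_distv hsj
      have hcs : dist c s = dist s c := dist_comm c s
      have hw' := (hw j).le
      nlinarith [infDist_nonneg (x := c) (s := (↑F : Set _))]
    have step1 : W c * infDist c (↑F : Set _)
        = ∑ j ∈ C c, w j * infDist c (↑F : Set _) := by
      rw [hW]; dsimp only; rw [Finset.sum_mul]
    rw [step1]
    calc ∑ j ∈ C c, w j * infDist c (↑F : Set _)
        ≤ ∑ j ∈ C c, (w j * distv (S j) (↑Fs : Set _) + w j * distv (S j) (↑F : Set _)) :=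
          Finset.sum_le_sum hptw
      _ = (∑ j ∈ C c, w j * distv (S j) (↑Fs : Set _))
          + ∑ j ∈ C c, w j * distv (S j) (↑F : Set _) := Finset.sum_add_distrib
      _ ≤ cost Fs + cost F := by
          refine add_le_add ?_ ?_ <;>
          · refine Finset.sum_le_sum_of_subset_of_nonneg (Finset.subset_univ _) ?_
            intro j _ _; exact mul_nonneg (hw j).le distv_nonneg
  set β : Fin N → ℝ := fun i => t i + 3 * (w i / W (m i)) with hβ
  have hmem : ∀ i, β i ∈ {β : ℝ | 0 ≤ β ∧
      ∀ F : Finset (EuclideanSpace ℝ (Fin d)), F.card = k →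
        w i * distv (S i) (↑F : Set _) ≤ β * ∑ l, w l * distv (S l) (↑F : Set _)} := by
    intro i
    constructor
    · have := ht0 i
      have h0 : 0 ≤ w i / W (m i) := div_nonneg (hw i).le (hWpos i).le
      rw [hβ]; dsimp only; linarith
    · intro F hF
      obtain ⟨s, hsi, hsd⟩ := exists_distv_eq (↑F : Set _) (hS i)
      obtain ⟨c, hcFs, hcd⟩ := exists_nearest hFs s
      have hcad : dist s c ≤ distv (S i) (↑Fs : Set _) := by
        rw [← hcd]; exact le_distv hsi
      have hcC : i ∈ C c :=
        Finset.mem_filter.mpr ⟨Finset.mem_univ i, s, hsi, hcad⟩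
      have hWm : W (m i) ≤ W c := hm2 i c (Finset.mem_filter.mpr ⟨hcFs, hcC⟩)
      have hW2 : W (m i) * infDist c (↑F : Set _) ≤ cost Fs + cost F := by
        have h := havg c F
        have h' : W (m i) * infDist c (↑F : Set _) ≤ W c * infDist c (↑F : Set _) :=
          mul_le_mul_of_nonneg_right hWm infDist_nonneg
        linarith
      have hid : infDist c (↑F : Set _) ≤ (cost Fs + cost F) / W (m i) :=
        (le_div_iff₀ (hWpos i)).mpr (by rw [mul_comm]; exact hW2)
      have tri : infDist s (↑F : Set _) ≤ dist s c + infDist c (↑F : Set _) := by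
        have h := infDist_le_infDist_add_dist (x := s) (y := c) (s := (↑F : Set _))
        linarith
      have hcost3 : cost Fs + cost F ≤ 3 * cost F := by
        have := h2 F hF
        have hc' : cost Fs ≤ 2 * cost F := this
        linarith
      have hdiv : w i * ((cost Fs + cost F) / W (m i))
          ≤ 3 * (w i / W (m i)) * cost F := by
        have e1 : w i * ((cost Fs + cost F) / W (m i))
            = (w i * (cost Fs + cost F)) / W (m i) := (mul_div_assoc _ _ _).symm
        have e2 : 3 * (w i / W (m i)) * cost F = (3 * w i * cost F) / W (m i) := by
          ring
        rw [e1, e2]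
        have hnum : w i * (cost Fs + cost F) ≤ 3 * w i * cost F := by
          nlinarith [(hw i).le]
        gcongr
        exact (hWpos i).le
      have hA := h1 i F hF
      have hfin : w i * distv (S i) (↑F : Set _)
          ≤ w i * distv (S i) (↑Fs : Set _) + w i * ((cost Fs + cost F) / W (m i)) := by
        rw [hsd]
        have := mul_le_mul_of_nonneg_left (le_trans tri
          (by linarith : dist s c + infDist c (↑F : Set _)
            ≤ distv (S i) (↑Fs : Set _) + (cost Fs + cost F) / W (m i))) (hw i).le
        linarith [this, mul_add (w i) (distv (S i) (↑Fs : Set _))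
          ((cost Fs + cost F) / W (m i))]
      have : w i * distv (S i) (↑F : Set _)
          ≤ t i * cost F + 3 * (w i / W (m i)) * cost F := by linarith
      show w i * distv (S i) (↑F : Set _) ≤ β i * cost F
      rw [hβ]; dsimp only; linarith [this]
  have hgroup : ∑ i, w i / W (m i) ≤ (Fs.card : ℝ) := by
    have hfib := Finset.sum_fiberwise_of_maps_to (g := m)
      (fun i (_ : i ∈ (Finset.univ : Finset (Fin N))) => hmFs i)
      (fun i => w i / W (m i))
    rw [← hfib]
    have hone : ∀ c ∈ Fs,
        (∑ i ∈ Finset.univ.filter (fun i => m i = c), w i / W (m i)) ≤ 1 := by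
      intro c _
      rcases (Finset.univ.filter (fun i => m i = c)).eq_empty_or_nonempty with he | hne
      · rw [he]; simp
      · obtain ⟨i0, hi0⟩ := hne
        have hi0' := (Finset.mem_filter.mp hi0).2
        have hWc : 0 < W c := by rw [← hi0']; exact hWpos i0
        have hrw : (∑ i ∈ Finset.univ.filter (fun i => m i = c), w i / W (m i))
            = (∑ i ∈ Finset.univ.filter (fun i => m i = c), w i) / W c := by
          rw [Finset.sum_div]
          refine Finset.sum_congr rfl fun i hi => ?_
          rw [(Finset.mem_filter.mp hi).2]
        rw [hrw, div_le_one hWc, hW]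
        refine Finset.sum_le_sum_of_subset_of_nonneg ?_ (fun j _ _ => (hw j).le)
        intro i hi
        have := (Finset.mem_filter.mp hi).2
        rw [← this]; exact hmC i
    calc (∑ c ∈ Fs, ∑ i ∈ Finset.univ.filter (fun i => m i = c), w i / W (m i))
        ≤ ∑ _c ∈ Fs, (1 : ℝ) := Finset.sum_le_sum hone
      _ = (Fs.card : ℝ) := by simp
  have hsumβ : ∑ i, β i ≤ 4 * (k : ℝ) + 3 := by
    have hsplit : ∑ i, β i = (∑ i, t i) + 3 * ∑ i, w i / W (m i) := by
      rw [hβ]; dsimp only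
      rw [Finset.sum_add_distrib, Finset.mul_sum]
    have hcard' : (Fs.card : ℝ) ≤ (k : ℝ) := Nat.cast_le.mpr hcard
    have hk' : (1 : ℝ) ≤ (k : ℝ) := by exact_mod_cast hk
    rw [hsplit]; linarith
  calc (∑ i, sInf {β : ℝ | 0 ≤ β ∧
        ∀ F : Finset (EuclideanSpace ℝ (Fin d)), F.card = k →
          w i * distv (S i) (↑F : Set _) ≤ β * ∑ l, w l * distv (S l) (↑F : Set _)})
      ≤ ∑ i, β i := by
        refine Finset.sum_le_sum fun i _ => ?_
        exact csInf_le ⟨0, fun x hx => hx.1⟩ (hmem i)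
    _ ≤ 4 * (k : ℝ) + 3 := hsumβ

lemma exists_sep {d : ℕ} (P : Finset (EuclideanSpace ℝ (Fin d))) (h2 : 1 < P.card) :
    ∃ δ > 0, ∀ p ∈ P, ∀ q ∈ P, p ≠ q → δ ≤ dist p q := by
  obtain ⟨a, ha, b, hb, hab⟩ := Finset.one_lt_card.mp h2
  have hfin : ({pq : (EuclideanSpace ℝ (Fin d)) × (EuclideanSpace ℝ (Fin d)) |
      pq.1 ∈ P ∧ pq.2 ∈ P ∧ pq.1 ≠ pq.2}).Finite :=
    Set.Finite.subset (P.finite_toSet.prod P.finite_toSet)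
      (fun pq hpq => ⟨hpq.1, hpq.2.1⟩)
  obtain ⟨⟨u, v⟩, huv, hmin⟩ := Set.exists_min_image _
    (fun pq => dist pq.1 pq.2) hfin ⟨(a, b), ha, hb, hab⟩
  exact ⟨dist u v, dist_pos.mpr huv.2.2,
    fun p hp q hq hne => hmin (p, q) ⟨hp, hq, hne⟩⟩

lemma card_le_of_close {d : ℕ} (P F : Finset (EuclideanSpace ℝ (Fin d)))
    (hF : F.Nonempty) (δ : ℝ)
    (hδ : ∀ p ∈ P, ∀ q ∈ P, p ≠ q → δ ≤ dist p q)
    (hclose : ∀ p ∈ P, infDist p (↑F : Set _) < δ / 3) : P.card ≤ F.card := by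
  classical
  choose φ hφF hφd using fun p => exists_nearest hF p
  have hinj : Set.InjOn φ ↑P := by
    intro p hp q hq hpq
    by_contra hne
    have hp' : p ∈ P := hp
    have hq' : q ∈ P := hq
    have hδle := hδ p hp' q hq' hne
    have htri : dist p q ≤ dist p (φ p) + dist q (φ q) := by
      calc dist p q ≤ dist p (φ p) + dist (φ p) q := dist_triangle p (φ p) q
        _ = dist p (φ p) + dist q (φ q) := by rw [hpq, dist_comm (φ q) q]
    have d1 : dist p (φ p) < δ / 3 := by rw [← hφd p]; exact hclose p hp'
    have d2 : dist q (φ q) < δ / 3 := by rw [← hφd q]; exact hclose q hq'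
    have := dist_nonneg (x := p) (y := q)
    linarith
  exact Finset.card_le_card_of_injOn φ (fun p _ => hφF p) hinj

set_option maxHeartbeats 1000000 in
/-- The total sensitivity of the generalized `k`-median instance (shapes are all
`k`-point subsets of `ℝ^d`) is at most `4k + 3`. -/
theorem stmt4 (d k N : ℕ) (hd : 1 ≤ d) (hk : 1 ≤ k)
    (S : Fin N → Finset (EuclideanSpace ℝ (Fin d))) (w : Fin N → ℝ)
    (hS : ∀ i, (S i).Nonempty) (hw : ∀ i, 0 < w i) :
    (∑ i, sInf {β : ℝ | 0 ≤ β ∧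
        ∀ F : Finset (EuclideanSpace ℝ (Fin d)), F.card = k →
          w i * distv (S i) (↑F : Set _) ≤ β * ∑ l, w l * distv (S l) (↑F : Set _)})
      ≤ 4 * (k : ℝ) + 3 := by
  classical
  haveI : Infinite (EuclideanSpace ℝ (Fin d)) := by
    refine Infinite.of_injective
      (fun r : ℝ => EuclideanSpace.single (⟨0, hd⟩ : Fin d) r) ?_
    intro a b hab
    have := congrArg (fun v : EuclideanSpace ℝ (Fin d) => v (⟨0, hd⟩ : Fin d)) hab
    simpa using this
  have hfinP : (⋃ i, (↑(S i) : Set (EuclideanSpace ℝ (Fin d)))).Finite :=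
    Set.finite_iUnion (fun i => (S i).finite_toSet)
  set P : Finset (EuclideanSpace ℝ (Fin d)) := hfinP.toFinset with hPdef
  have hPmem : ∀ x, x ∈ P ↔ ∃ i, x ∈ S i := by
    intro x
    rw [hPdef, Set.Finite.mem_toFinset, Set.mem_iUnion]
    simp
  by_cases hPk : P.card ≤ k
  · -- degenerate case: all points fit in k centers
    obtain ⟨F₀, hPF₀, hF₀⟩ := Infinite.exists_superset_card_eq P k hPk
    have hF₀ne : F₀.Nonempty := Finset.card_pos.mp (by omega)
    have hzero : ∀ i, distv (S i) (↑F₀ : Set _) = 0 := by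
      intro i
      refine le_antisymm (distv_le le_rfl fun s hs => ?_) distv_nonneg
      have hsP : s ∈ F₀ := hPF₀ ((hPmem s).mpr ⟨i, hs⟩)
      rw [Metric.infDist_zero_of_mem (by exact_mod_cast hsP)]
    refine key_sens hk S w hS hw F₀ hF₀ne (le_of_eq hF₀) (fun _ => 0)
      (fun _ => le_rfl) (by simp) ?_ ?_
    · intro i F _
      rw [hzero i]
      simp
    · intro F _
      have h0 : (∑ l, w l * distv (S l) (↑F₀ : Set _)) = 0 := by
        refine Finset.sum_eq_zero fun l _ => ?_
        rw [hzero l, mul_zero]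
      rw [h0]
      have : 0 ≤ ∑ l, w l * distv (S l) (↑F : Set _) :=
        Finset.sum_nonneg fun l _ => mul_nonneg (hw l).le distv_nonneg
      linarith
  · -- nondegenerate case
    push_neg at hPk
    have hPne : P.Nonempty := Finset.card_pos.mp (by omega)
    obtain ⟨p0, hp0⟩ := hPne
    obtain ⟨i0, _⟩ := (hPmem p0).mp hp0
    have huniv : (Finset.univ : Finset (Fin N)).Nonempty := ⟨i0, Finset.mem_univ _⟩
    have h2pts : 1 < P.card := lt_of_le_of_lt hk hPk
    obtain ⟨δ, hδpos, hδsep⟩ := exists_sep P h2pts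
    set wmin := Finset.univ.inf' huniv w with hwmin
    have hwminpos : 0 < wmin := (Finset.lt_inf'_iff _).mpr fun i _ => hw i
    have hwmin_le : ∀ i, wmin ≤ w i := fun i => Finset.inf'_le _ (Finset.mem_univ i)
    set ε := wmin * (δ / 3) with hε
    have hεpos : 0 < ε := by positivity
    have hlow : ∀ F : Finset (EuclideanSpace ℝ (Fin d)), F.card = k →
        ε ≤ ∑ l, w l * distv (S l) (↑F : Set _) := by
      intro F hF
      by_contra hcon
      push_neg at hcon
      have hFne : F.Nonempty := Finset.card_pos.mp (by omega)
      have hptF : ∀ p ∈ P, infDist p (↑F : Set _) < δ / 3 := by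
        intro p hp
        obtain ⟨l, hpl⟩ := (hPmem p).mp hp
        have hs1 : w l * distv (S l) (↑F : Set _)
            ≤ ∑ j, w j * distv (S j) (↑F : Set _) :=
          Finset.single_le_sum (f := fun j => w j * distv (S j) (↑F : Set _))
            (fun j _ => mul_nonneg (hw j).le distv_nonneg) (Finset.mem_univ l)
        have hs2 : w l * distv (S l) (↑F : Set _) < wmin * (δ / 3) :=
          lt_of_le_of_lt hs1 hcon
        have hs3 : wmin * (δ / 3) ≤ w l * (δ / 3) :=
          mul_le_mul_of_nonneg_right (hwmin_le l) (by positivity)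
        have hs4 : distv (S l) (↑F : Set _) < δ / 3 := by
          have := lt_of_lt_of_le hs2 hs3
          exact lt_of_mul_lt_mul_left this (hw l).le
        exact lt_of_le_of_lt (le_distv hpl) hs4
      have := card_le_of_close P F hFne δ hδsep hptF
      omega
    have hCne : Set.Nonempty {x : ℝ | ∃ F : Finset (EuclideanSpace ℝ (Fin d)),
        F.card = k ∧ (∑ l, w l * distv (S l) (↑F : Set _)) = x} := by
      obtain ⟨F1, hF1⟩ := Infinite.exists_subset_card_eq
        (EuclideanSpace ℝ (Fin d)) k
      exact ⟨_, F1, hF1, rfl⟩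
    have hClow : ∀ x ∈ {x : ℝ | ∃ F : Finset (EuclideanSpace ℝ (Fin d)),
        F.card = k ∧ (∑ l, w l * distv (S l) (↑F : Set _)) = x}, ε ≤ x := by
      rintro x ⟨F, hF, rfl⟩
      exact hlow F hF
    have hCbdd : BddBelow {x : ℝ | ∃ F : Finset (EuclideanSpace ℝ (Fin d)),
        F.card = k ∧ (∑ l, w l * distv (S l) (↑F : Set _)) = x} := ⟨ε, hClow⟩
    have hc₀ε : ε ≤ sInf {x : ℝ | ∃ F : Finset (EuclideanSpace ℝ (Fin d)),
        F.card = k ∧ (∑ l, w l * distv (S l) (↑F : Set _)) = x} := le_csInf hCne hClow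
    have hc₀pos : 0 < sInf {x : ℝ | ∃ F : Finset (EuclideanSpace ℝ (Fin d)),
        F.card = k ∧ (∑ l, w l * distv (S l) (↑F : Set _)) = x} :=
      lt_of_lt_of_le hεpos hc₀ε
    obtain ⟨x, hxC, hxlt⟩ := exists_lt_of_csInf_lt hCne
      (show sInf {x : ℝ | ∃ F : Finset (EuclideanSpace ℝ (Fin d)),
        F.card = k ∧ (∑ l, w l * distv (S l) (↑F : Set _)) = x}
        < 2 * sInf {x : ℝ | ∃ F : Finset (EuclideanSpace ℝ (Fin d)),
        F.card = k ∧ (∑ l, w l * distv (S l) (↑F : Set _)) = x} by linarith)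
    obtain ⟨Fs, hFsk, hFsx⟩ := hxC
    have hFsne : Fs.Nonempty := Finset.card_pos.mp (by omega)
    have hFs2 : ∀ F : Finset (EuclideanSpace ℝ (Fin d)), F.card = k →
        (∑ l, w l * distv (S l) (↑Fs : Set _))
          ≤ 2 * ∑ l, w l * distv (S l) (↑F : Set _) := by
      intro F hF
      have hle : sInf {x : ℝ | ∃ F : Finset (EuclideanSpace ℝ (Fin d)),
          F.card = k ∧ (∑ l, w l * distv (S l) (↑F : Set _)) = x}
            ≤ ∑ l, w l * distv (S l) (↑F : Set _) :=
        csInf_le hCbdd ⟨F, hF, rfl⟩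
      rw [hFsx]
      linarith
    set cs := ∑ l, w l * distv (S l) (↑Fs : Set _) with hcs
    have hcspos : 0 < cs := lt_of_lt_of_le hεpos (hlow Fs hFsk)
    set t : Fin N → ℝ := fun i => 2 * (w i * distv (S i) (↑Fs : Set _)) / cs with htdef
    refine key_sens hk S w hS hw Fs hFsne (le_of_eq hFsk) t ?_ ?_ ?_ hFs2
    · intro i
      have : 0 ≤ w i * distv (S i) (↑Fs : Set _) := mul_nonneg (hw i).le distv_nonneg
      rw [htdef]
      positivity
    · rw [htdef]
      have : (∑ i, 2 * (w i * distv (S i) (↑Fs : Set _)) / cs) = 2 * cs / cs := by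
        rw [← Finset.sum_div, ← Finset.mul_sum, hcs]
      rw [this, mul_div_assoc, div_self hcspos.ne']
      norm_num
    · intro i F hF
      have hterm : 0 ≤ w i * distv (S i) (↑Fs : Set _) :=
        mul_nonneg (hw i).le distv_nonneg
      have h2' := hFs2 F hF
      rw [htdef]
      dsimp only
      rw [div_mul_eq_mul_div, le_div_iff₀ hcspos]
      nlinarith
end

section
/- Let 0 < ε ≤ 1, let d ≥ 1 and 0 ≤ j ≤ d−1, and let 𝒫 be an existential instance of points s₁,…,sₙ ∈ ℝ^d with probabilities p₁,…,pₙ satisfying Σᵢ pᵢ < ε. Then for every j-flat F in ℝ^d: (1−ε)·Σᵢ pᵢ·d(sᵢ,F) ≤ J(𝒫,F) ≤ Σᵢ pᵢ·d(sᵢ,F). -/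
/-- Expectation over realizations in the existential uncertainty model:
each index `i` is present independently with probability `p i`. -/
noncomputable def expVal {n : ℕ} (p : Fin n → ℝ) (g : Finset (Fin n) → ℝ) : ℝ :=
  ∑ A : Finset (Fin n), (∏ i ∈ A, p i) * (∏ i ∈ Aᶜ, (1 - p i)) * g A

/-- `F` is a `j`-flat: a (nonempty) `j`-dimensional affine subspace of `ℝ^d`. -/
def IsJFlat {d : ℕ} (j : ℕ) (F : Set (EuclideanSpace ℝ (Fin d))) : Prop :=
  F.Nonempty ∧ ∃ W : AffineSubspace ℝ (EuclideanSpace ℝ (Fin d)),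
    (W : Set (EuclideanSpace ℝ (Fin d))) = F ∧ Module.finrank ℝ W.direction = j

/-- Sum of weights over a powerset is 1. -/
lemma sum_weights {n : ℕ} (p : Fin n → ℝ) (u : Finset (Fin n)) :
    ∑ A ∈ u.powerset, (∏ i ∈ A, p i) * (∏ i ∈ u \ A, (1 - p i)) = 1 := by
  rw [← Finset.prod_add]
  simp

/-- The marginal: sum of weights over sets containing `i` equals `p i`. -/
lemma marginal {n : ℕ} (p : Fin n → ℝ) (i : Fin n) :
    ∑ A : Finset (Fin n),
      (if i ∈ A then (∏ k ∈ A, p k) * (∏ k ∈ Aᶜ, (1 - p k)) else 0) = p i := by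
  classical
  have hu : (Finset.univ : Finset (Fin n)) = insert i (Finset.univ.erase i) :=
    (Finset.insert_erase (Finset.mem_univ i)).symm
  rw [show (Finset.univ : Finset (Finset (Fin n)))
      = (Finset.univ : Finset (Fin n)).powerset from Finset.powerset_univ.symm]
  conv_lhs => rw [hu, Finset.sum_powerset_insert (Finset.notMem_erase i _)]
  have h1 : ∑ t ∈ (Finset.univ.erase i).powerset,
      (if i ∈ t then (∏ k ∈ t, p k) * (∏ k ∈ tᶜ, (1 - p k)) else 0) = 0 := by
    apply Finset.sum_eq_zero
    intro t ht
    have : i ∉ t := fun h =>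
      Finset.notMem_erase i _ ((Finset.mem_powerset.mp ht) h)
    simp [this]
  rw [h1, zero_add]
  have h2 : ∀ t ∈ (Finset.univ.erase i).powerset,
      (if i ∈ insert i t then (∏ k ∈ insert i t, p k) * (∏ k ∈ (insert i t)ᶜ, (1 - p k)) else 0)
      = p i * ((∏ k ∈ t, p k) * (∏ k ∈ Finset.univ.erase i \ t, (1 - p k))) := by
    intro t ht
    have hit : i ∉ t := fun h =>
      Finset.notMem_erase i _ ((Finset.mem_powerset.mp ht) h)
    have hc : (insert i t)ᶜ = Finset.univ.erase i \ t := by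
      ext k
      simp only [Finset.mem_compl, Finset.mem_insert, Finset.mem_sdiff, Finset.mem_erase,
        Finset.mem_univ, and_true, true_and]
      tauto
    rw [if_pos (Finset.mem_insert_self i t), Finset.prod_insert hit, hc]
    ring
  rw [Finset.sum_congr rfl h2, ← Finset.mul_sum, sum_weights, mul_one]

/-- Weierstrass product inequality. -/
lemma weier {n : ℕ} (q : Fin n → ℝ) (u : Finset (Fin n))
    (h0 : ∀ i, 0 ≤ q i) (h1 : ∀ i, q i ≤ 1) :
    1 - ∑ i ∈ u, q i ≤ ∏ i ∈ u, (1 - q i) := by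
  classical
  induction u using Finset.cons_induction with
  | empty => simp
  | cons a t hat ih =>
    rw [Finset.sum_cons, Finset.prod_cons]
    have h1a : 0 ≤ 1 - q a := by linarith [h1 a]
    have := mul_le_mul_of_nonneg_left ih h1a
    nlinarith [h0 a, Finset.sum_nonneg (fun i (_ : i ∈ t) => h0 i)]

theorem stmt5 (d j n : ℕ) (hd : 1 ≤ d) (hj : j + 1 ≤ d)
    (ε : ℝ) (hε0 : 0 < ε) (hε1 : ε ≤ 1)
    (s : Fin n → EuclideanSpace ℝ (Fin d)) (p : Fin n → ℝ)
    (hp0 : ∀ i, 0 ≤ p i) (hp1 : ∀ i, p i ≤ 1)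
    (hsum : (∑ i, p i) < ε) :
    ∀ F : Set (EuclideanSpace ℝ (Fin d)), IsJFlat j F →
      (1 - ε) * (∑ i, p i * Metric.infDist (s i) F) ≤
        expVal p (fun A => maxVal A (fun i => Metric.infDist (s i) F)) ∧
      expVal p (fun A => maxVal A (fun i => Metric.infDist (s i) F)) ≤
        (∑ i, p i * Metric.infDist (s i) F) := by
  classical
  intro F _
  set f : Fin n → ℝ := fun i => Metric.infDist (s i) F with hfdef
  have hf0 : ∀ i, 0 ≤ f i := fun i => Metric.infDist_nonneg
  set w : Finset (Fin n) → ℝ := fun A => (∏ i ∈ A, p i) * (∏ i ∈ Aᶜ, (1 - p i)) with hwdef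
  have hw0 : ∀ A, 0 ≤ w A :=
    fun A => mul_nonneg (Finset.prod_nonneg fun i _ => hp0 i)
      (Finset.prod_nonneg fun i _ => by linarith [hp1 i])
  have hmax0 : ∀ A : Finset (Fin n), 0 ≤ maxVal A f := by
    intro A
    unfold maxVal
    rw [Finset.le_fold_max]
    exact Or.inl le_rfl
  have hmaxle : ∀ A : Finset (Fin n), maxVal A f ≤ ∑ i ∈ A, f i := by
    intro A
    unfold maxVal
    rw [Finset.fold_max_le]
    exact ⟨Finset.sum_nonneg fun i _ => hf0 i,
       fun i hi => Finset.single_le_sum (fun k _ => hf0 k) hi⟩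
  have hexp : expVal p (fun A => maxVal A f) = ∑ A : Finset (Fin n), w A * maxVal A f := rfl
  have hident : ∑ A : Finset (Fin n), w A * ∑ i ∈ A, f i = ∑ i, p i * f i := by
    have step : ∀ A : Finset (Fin n),
        w A * ∑ i ∈ A, f i = ∑ i, (if i ∈ A then w A else 0) * f i := by
      intro A
      rw [Finset.mul_sum]
      rw [show (∑ i ∈ A, w A * f i) = ∑ i, if i ∈ A then w A * f i else 0 by
        rw [Finset.sum_ite_mem, Finset.univ_inter]]
      exact Finset.sum_congr rfl fun i _ => by split_ifs <;> simp
    rw [Finset.sum_congr rfl fun A _ => step A, Finset.sum_comm]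
    exact Finset.sum_congr rfl fun i _ => by
      rw [← Finset.sum_mul, marginal p i]
  constructor
  · -- lower bound
    have key : ∀ i : Fin n, (1 - ε) * (p i * f i) ≤ w {i} * f i := by
      intro i
      have hW : 1 - ε ≤ ∏ k ∈ ({i} : Finset (Fin n))ᶜ, (1 - p k) := by
        have h2 : ∑ k ∈ ({i} : Finset (Fin n))ᶜ, p k ≤ ∑ k, p k :=
          Finset.sum_le_sum_of_subset_of_nonneg (Finset.subset_univ _)
            (fun k _ _ => hp0 k)
        have := weier p ({i} : Finset (Fin n))ᶜ hp0 hp1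
        linarith
      have hw_i : w {i} = p i * ∏ k ∈ ({i} : Finset (Fin n))ᶜ, (1 - p k) := by
        simp [hwdef]
      rw [hw_i]
      have := mul_le_mul_of_nonneg_right hW (mul_nonneg (hp0 i) (hf0 i))
      nlinarith [hp0 i, hf0 i]
    have hsub : (Finset.univ.image fun i : Fin n => ({i} : Finset (Fin n)))
        ⊆ Finset.univ := Finset.subset_univ _
    have himg : ∑ A ∈ Finset.univ.image (fun i : Fin n => ({i} : Finset (Fin n))),
        w A * maxVal A f = ∑ i, w {i} * f i := by
      rw [Finset.sum_image (fun a _ b _ h => Finset.singleton_injective h)]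
      refine Finset.sum_congr rfl fun i _ => ?_
      have : maxVal ({i} : Finset (Fin n)) f = f i := by
        unfold maxVal
        rw [Finset.fold_singleton]
        exact max_eq_left (hf0 i)
      rw [this]
    calc (1 - ε) * (∑ i, p i * f i) = ∑ i, (1 - ε) * (p i * f i) := Finset.mul_sum _ _ _
      _ ≤ ∑ i, w {i} * f i := Finset.sum_le_sum fun i _ => key i
      _ = ∑ A ∈ Finset.univ.image (fun i : Fin n => ({i} : Finset (Fin n))),
            w A * maxVal A f := himg.symm
      _ ≤ ∑ A : Finset (Fin n), w A * maxVal A f :=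
          Finset.sum_le_sum_of_subset_of_nonneg hsub
            (fun A _ _ => mul_nonneg (hw0 A) (hmax0 A))
      _ = expVal p (fun A => maxVal A f) := hexp.symm
  · -- upper bound
    calc expVal p (fun A => maxVal A f)
        = ∑ A : Finset (Fin n), w A * maxVal A f := hexp
      _ ≤ ∑ A : Finset (Fin n), w A * ∑ i ∈ A, f i :=
          Finset.sum_le_sum fun A _ =>
            mul_le_mul_of_nonneg_left (hmaxle A) (hw0 A)
      _ = ∑ i, p i * f i := hident
end

section
/- Let n ≥ 1, let p₁,…,pₙ ∈ [0,1], and let 0 ≤ d₁ ≤ d₂ ≤ … ≤ dₙ be real numbers. Then Σ_{A⊆{1,…,n}} (∏_{i∈A} pᵢ)(∏_{i∉A}(1−pᵢ))·(max_{i∈A} dᵢ) = Σ_{i=1}^{n} pᵢ·dᵢ·∏_{j>i}(1−p_j), where the maximum over the empty set is taken to be 0. -/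
private lemma maxVal_eq_max' {α : Type*} [LinearOrder α] {A : Finset α} (h : A.Nonempty)
    (f : α → ℝ) (hf : ∀ i, 0 ≤ f i) (hm : Monotone f) :
    maxVal A f = f (A.max' h) := by
  induction h using Finset.Nonempty.cons_induction with
  | singleton i => simp [maxVal, max_eq_left (hf i)]
  | cons i A hi hA ih =>
      have e1 : (Finset.cons i A hi).max' (Finset.cons_nonempty hi) = max (A.max' hA) i := by
        apply le_antisymm
        · apply Finset.max'_le
          intro y hy
          rcases Finset.mem_cons.1 hy with rfl | hy
          · exact le_max_right _ _
          · exact le_trans (A.le_max' y hy) (le_max_left _ _)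
        · apply max_le
          · exact Finset.le_max' _ _ (Finset.mem_cons.2 (Or.inr (A.max'_mem hA)))
          · exact Finset.le_max' _ _ (Finset.mem_cons_self i A)
      rw [maxVal, Finset.fold_cons, e1, hm.map_max, ← ih, maxVal, max_comm (f i)]

theorem stmt6 (n : ℕ) (hn : 1 ≤ n) (p : Fin n → ℝ)
    (hp0 : ∀ i, 0 ≤ p i) (hp1 : ∀ i, p i ≤ 1)
    (dv : Fin n → ℝ) (hd0 : ∀ i, 0 ≤ dv i) (hmono : Monotone dv) :
    expVal p (fun A => maxVal A dv) =
      ∑ i, p i * dv i * ∏ j ∈ Finset.Ioi i, (1 - p j) := by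
  have key : ∀ A : Finset (Fin n),
      maxVal A dv = ∑ i, if i ∈ A ∧ ∀ j ∈ A, j ≤ i then dv i else 0 := by
    intro A
    rcases A.eq_empty_or_nonempty with rfl | h
    · simp [maxVal]
    · rw [Finset.sum_eq_single (A.max' h), maxVal_eq_max' h dv hd0 hmono]
      · rw [if_pos ⟨A.max'_mem h, fun j hj => A.le_max' j hj⟩]
      · intro b _ hb
        rw [if_neg]
        rintro ⟨hbA, hble⟩
        exact hb (le_antisymm (A.le_max' b hbA) (hble _ (A.max'_mem h)))
      · simp
  have hS : ∀ i : Fin n,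
      (∑ A : Finset (Fin n), if i ∈ A ∧ ∀ j ∈ A, j ≤ i
          then (∏ k ∈ A, p k) * ∏ k ∈ Aᶜ, (1 - p k) else 0)
        = p i * ∏ j ∈ Finset.Ioi i, (1 - p j) := by
    intro i
    rw [Finset.sum_ite, Finset.sum_const_zero, add_zero]
    rw [Finset.sum_bij' (i := fun A _ => A.erase i) (j := fun B _ => insert i B)
      (t := (Finset.Iio i).powerset)
      (hi := by
        intro A hA
        simp only [Finset.mem_filter] at hA
        simp only [Finset.mem_powerset]
        intro j hj
        simp only [Finset.mem_erase] at hj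
        exact Finset.mem_Iio.2 (lt_of_le_of_ne (hA.2.2 j hj.2) hj.1)
      )
      (hj := by
        intro B hB
        simp only [Finset.mem_powerset] at hB
        refine Finset.mem_filter.2 ⟨Finset.mem_univ _, Finset.mem_insert_self i B, ?_⟩
        intro j hj
        rcases Finset.mem_insert.1 hj with rfl | hj
        · exact le_refl j
        · exact le_of_lt (Finset.mem_Iio.1 (hB hj))
      )
      (left_neg := by
        intro A hA
        simp only [Finset.mem_filter] at hA
        exact Finset.insert_erase hA.2.1
      )
      (right_neg := by
        intro B hB
        simp only [Finset.mem_powerset] at hB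
        exact Finset.erase_insert (fun hiB => lt_irrefl i (Finset.mem_Iio.1 (hB hiB)))
      )]
    · have hone : ∑ B ∈ (Finset.Iio i).powerset,
          (∏ k ∈ B, p k) * ∏ k ∈ Finset.Iio i \ B, (1 - p k) = 1 := by
        rw [← Finset.prod_add]
        simp
      calc (∑ B ∈ (Finset.Iio i).powerset,
              (∏ k ∈ insert i B, p k) * ∏ k ∈ (insert i B)ᶜ, (1 - p k))
          = ∑ B ∈ (Finset.Iio i).powerset,
              (p i * ∏ j ∈ Finset.Ioi i, (1 - p j)) *
                ((∏ k ∈ B, p k) * ∏ k ∈ Finset.Iio i \ B, (1 - p k)) := by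
            refine Finset.sum_congr rfl fun B hB => ?_
            simp only [Finset.mem_powerset] at hB
            have hiB : i ∉ B := fun hiB => lt_irrefl i (Finset.mem_Iio.1 (hB hiB))
            have hcompl : (insert i B)ᶜ = (Finset.Iio i \ B) ∪ Finset.Ioi i := by
              ext k
              simp only [Finset.mem_compl, Finset.mem_insert, Finset.mem_union,
                Finset.mem_sdiff, Finset.mem_Iio, Finset.mem_Ioi]
              constructor
              · intro hk
                push_neg at hk
                rcases lt_trichotomy k i with h' | h' | h'
                · exact Or.inl ⟨h', hk.2⟩
                · exact absurd h' hk.1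
                · exact Or.inr h'
              · rintro (⟨hk1, hk2⟩ | hk)
                · push_neg
                  exact ⟨ne_of_lt hk1, hk2⟩
                · push_neg
                  refine ⟨ne_of_gt hk, fun hkB => absurd (Finset.mem_Iio.1 (hB hkB)) (not_lt.2 hk.le)⟩
            have hdisj : Disjoint (Finset.Iio i \ B) (Finset.Ioi i) := by
              refine Finset.disjoint_left.2 fun k hk hk' => ?_
              exact absurd (Finset.mem_Ioi.1 hk') (not_lt.2 (Finset.mem_Iio.1 (Finset.mem_sdiff.1 hk).1).le)
            rw [Finset.prod_insert hiB, hcompl, Finset.prod_union hdisj]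
            ring
      _ = p i * ∏ j ∈ Finset.Ioi i, (1 - p j) := by
            rw [← Finset.mul_sum, hone, mul_one]
    · intro A hA
      simp only [Finset.mem_filter] at hA
      rw [Finset.insert_erase hA.2.1]
  unfold expVal
  simp only [key, Finset.mul_sum, mul_ite, mul_zero]
  rw [Finset.sum_comm]
  refine Finset.sum_congr rfl fun i _ => ?_
  have : (∑ A : Finset (Fin n), if i ∈ A ∧ ∀ j ∈ A, j ≤ i
      then (∏ k ∈ A, p k) * (∏ k ∈ Aᶜ, (1 - p k)) * dv i else 0)
      = (∑ A : Finset (Fin n), if i ∈ A ∧ ∀ j ∈ A, j ≤ i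
      then (∏ k ∈ A, p k) * (∏ k ∈ Aᶜ, (1 - p k)) else 0) * dv i := by
    rw [Finset.sum_mul]
    exact Finset.sum_congr rfl fun A _ => by rw [ite_mul, zero_mul]
  rw [this, hS i]
  ring
end

section
/- There is a universal constant C > 0 such that the following holds. Let d ≥ 2 and 1 ≤ j ≤ d−1, and let s₁,…,sₙ ∈ ℝ^d be points with weights wᵢ > 0. For each i define σ(sᵢ) = inf{β ≥ 0 : wᵢ·d(sᵢ,F) ≤ β·Σ_{l=1}^n w_l·d(s_l,F) for every j-flat F in ℝ^d}. Then Σᵢ σ(sᵢ) ≤ C·j^{3/2}. -/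
set_option maxHeartbeats 1000000

open Metric Module Submodule RealInnerProductSpace

section Aux

variable {d : ℕ}

local notation "E" => EuclideanSpace ℝ (Fin d)

lemma le_infDist' {α : Type*} [MetricSpace α] {s : Set α} (hs : s.Nonempty) {x : α} {b : ℝ}
    (h : ∀ y ∈ s, b ≤ dist x y) : b ≤ Metric.infDist x s := by
  by_contra hlt
  push_neg at hlt
  obtain ⟨y, hy, hdy⟩ := (Metric.infDist_lt_iff hs).1 hlt
  exact absurd (h y hy) (by linarith)

lemma infDist_mk' (W : Submodule ℝ E) (f p : E) :
    Metric.infDist p (AffineSubspace.mk' f W : Set E) =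
      ‖(p - f) - (orthogonalProjection W (p - f) : E)‖ := by
  have hne : (AffineSubspace.mk' f W : Set E).Nonempty := ⟨f, AffineSubspace.self_mem_mk' f W⟩
  apply le_antisymm
  · have hmem : ((orthogonalProjection W (p - f) : E) + f) ∈ (AffineSubspace.mk' f W : Set E) := by
      have := AffineSubspace.vadd_mem_mk' f (orthogonalProjection W (p - f)).2
      simpa [vadd_eq_add] using this
    calc Metric.infDist p (AffineSubspace.mk' f W : Set E)
        ≤ dist p ((orthogonalProjection W (p - f) : E) + f) := Metric.infDist_le_dist_of_mem hmem
      _ = ‖(p - f) - (orthogonalProjection W (p - f) : E)‖ := by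
          rw [dist_eq_norm]; congr 1; abel
  · apply le_infDist' hne
    intro y hy
    rw [AffineSubspace.mem_coe, AffineSubspace.mem_mk'] at hy
    have hy' : y - f ∈ W := hy
    set u : E := p - f with hu
    set v : E := y - f with hv
    set Pu : E := (orthogonalProjection W u : E) with hPu
    have hmemW : (u - Pu) - (u - v) ∈ W := by
      have heq : (u - Pu) - (u - v) = v - Pu := by abel
      rw [heq]
      exact Submodule.sub_mem _ hy' (orthogonalProjection W u).2
    have hinner : (inner ℝ (u - Pu) ((u - Pu) - (u - v)) : ℝ) = 0 :=
      W.starProjection_inner_eq_zero u _ hmemW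
    have hsq : ‖u - Pu‖ ^ 2 ≤ ‖u - v‖ ^ 2 := by
      have hdecomp : u - v = (u - Pu) - ((u - Pu) - (u - v)) := by abel
      rw [hdecomp]
      conv_rhs => rw [norm_sub_sq_real]
      rw [hinner]
      nlinarith [sq_nonneg ‖(u - Pu) - (u - v)‖]
    have hle : ‖u - Pu‖ ≤ ‖u - v‖ := by
      have h1 := Real.sqrt_le_sqrt hsq
      rwa [Real.sqrt_sq (norm_nonneg _), Real.sqrt_sq (norm_nonneg _)] at h1
    calc ‖u - Pu‖ ≤ ‖u - v‖ := hle
      _ = dist p y := by rw [dist_eq_norm]; congr 1; rw [hu, hv]; abel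

lemma auerbach {n : ℕ} (w : Fin n → ℝ) (hw : ∀ i, 0 < w i) (X : Submodule ℝ (Fin n → ℝ)) :
    ∃ t : Fin n → ℝ, (∀ i, 0 ≤ t i) ∧ (∑ i, t i ≤ (Module.finrank ℝ X : ℝ)) ∧
      ∀ x ∈ X, ∀ i, w i * |x i| ≤ t i * ∑ l, w l * |x l| := by
  classical
  set N : (Fin n → ℝ) → ℝ := fun x => ∑ l, w l * |x l| with hN
  have hN0 : ∀ x, 0 ≤ N x := fun x =>
    Finset.sum_nonneg fun l _ => mul_nonneg (hw l).le (abs_nonneg _)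
  have hNzero : ∀ x, N x = 0 → x = 0 := by
    intro x hx
    funext l
    have h1 : ∀ i ∈ Finset.univ, (0:ℝ) ≤ w i * |x i| := fun i _ =>
      mul_nonneg (hw i).le (abs_nonneg _)
    have h2 := (Finset.sum_eq_zero_iff_of_nonneg h1).1 hx l (Finset.mem_univ l)
    have h3 : |x l| = 0 := by
      rcases mul_eq_zero.1 h2 with h | h
      · exact absurd h (hw l).ne'
      · exact h
    simpa using abs_eq_zero.1 h3
  have hNpos : ∀ x, x ≠ 0 → 0 < N x := by
    intro x hx
    rcases (hN0 x).lt_or_eq with h | h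
    · exact h
    · exact absurd (hNzero x h.symm) hx
  have hNsmul : ∀ (c : ℝ) (x), N (c • x) = |c| * N x := by
    intro c x
    simp only [hN, Pi.smul_apply, smul_eq_mul, abs_mul, Finset.mul_sum]
    exact Finset.sum_congr rfl fun l _ => by ring
  have hNcont : Continuous N := by
    apply continuous_finset_sum
    intro l _
    exact continuous_const.mul ((continuous_apply l).abs)
  have hsingle : ∀ (x : Fin n → ℝ) (i : Fin n), w i * |x i| ≤ N x := by
    intro x i
    exact Finset.single_le_sum (fun l (_ : l ∈ Finset.univ) =>
      mul_nonneg (hw l).le (abs_nonneg _)) (Finset.mem_univ i)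
  obtain ⟨Y, hY⟩ := X.exists_isCompl
  set m := Module.finrank ℝ X with hm
  let g : Basis (Fin m) ℝ X := Module.finBasis ℝ X
  let prj : (Fin n → ℝ) →ₗ[ℝ] X := X.linearProjOfIsCompl Y hY
  let π : (Fin n → ℝ) →ₗ[ℝ] (Fin m → ℝ) := (g.equivFun.toLinearMap).comp prj
  have hπX : ∀ (x : Fin n → ℝ) (hx : x ∈ X), π x = g.equivFun ⟨x, hx⟩ := by
    intro x hx
    simp only [π, LinearMap.comp_apply, LinearEquiv.coe_toLinearMap]
    congr 1
    exact Submodule.linearProjOfIsCompl_apply_left hY ⟨x, hx⟩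
  have hπinj : ∀ x y : Fin n → ℝ, x ∈ X → y ∈ X → π x = π y → x = y := by
    intro x y hx hy hxy
    rw [hπX x hx, hπX y hy] at hxy
    have := g.equivFun.injective hxy
    exact congrArg Subtype.val this
  have hπcont : Continuous π := π.continuous_of_finiteDimensional
  set D : (Fin m → (Fin n → ℝ)) → ℝ := fun b => |(Matrix.of fun k j => π (b k) j).det| with hD
  have hDcont : Continuous D := by
    apply Continuous.abs
    apply Continuous.matrix_det
    exact continuous_matrix fun k j => (continuous_apply j).comp (hπcont.comp (continuous_apply k))
  set S : Set (Fin n → ℝ) := {x | x ∈ X ∧ N x ≤ 1} with hS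
  have hScompact : IsCompact S := by
    have hScl : IsClosed S := by
      have h1 : IsClosed (X : Set (Fin n → ℝ)) := X.closed_of_finiteDimensional
      have h2 : IsClosed {x : Fin n → ℝ | N x ≤ 1} := isClosed_le hNcont continuous_const
      exact h1.inter h2
    have hbdd : S ⊆ Metric.closedBall 0 (∑ l, 1 / w l) := by
      intro x hx
      rw [Metric.mem_closedBall, dist_zero_right]
      have hB0 : (0:ℝ) ≤ ∑ l, 1 / w l :=
        Finset.sum_nonneg fun l _ => by have := hw l; positivity
      apply pi_norm_le_iff_of_nonneg hB0 |>.2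
      intro i
      have h1 : w i * |x i| ≤ 1 := le_trans (hsingle x i) hx.2
      have h2 : |x i| ≤ 1 / w i := by
        rw [le_div_iff₀ (hw i)]; linarith [h1]
      calc ‖x i‖ = |x i| := Real.norm_eq_abs _
        _ ≤ 1 / w i := h2
        _ ≤ ∑ l, 1 / w l := Finset.single_le_sum (f := fun l => 1 / w l)
            (fun l _ => by have := hw l; positivity) (Finset.mem_univ i)
    exact Metric.isCompact_of_isClosed_isBounded hScl
      ((Metric.isBounded_closedBall).subset hbdd)
  set K : Set (Fin m → (Fin n → ℝ)) := Set.univ.pi (fun _ => S) with hK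
  have hKcompact : IsCompact K := isCompact_univ_pi fun _ => hScompact
  -- the starting basis point
  have hgne : ∀ k : Fin m, ((g k : Fin n → ℝ)) ≠ 0 := by
    intro k hk
    exact g.ne_zero k (by exact_mod_cast Subtype.ext hk)
  set b₀ : Fin m → (Fin n → ℝ) := fun k => (N (g k))⁻¹ • ((g k : Fin n → ℝ)) with hb₀
  have hNg : ∀ k, 0 < N (g k) := fun k => hNpos _ (hgne k)
  have hb₀K : b₀ ∈ K := by
    intro k _
    constructor
    · exact Submodule.smul_mem X _ (g k).2
    · rw [hNsmul]
      rw [abs_of_nonneg (inv_nonneg.2 (hN0 _))]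
      rw [inv_mul_cancel₀ (hNg k).ne']
  have hDb₀ : 0 < D b₀ := by
    have hmat : (Matrix.of fun k j => π (b₀ k) j) = Matrix.diagonal (fun k => (N (g k))⁻¹) := by
      ext k j
      have h1 : π (b₀ k) = (N (g k))⁻¹ • π ((g k : Fin n → ℝ)) := by
        simp [hb₀, map_smul]
      have h2 : π ((g k : Fin n → ℝ)) = g.equivFun (g k) := by
        rw [hπX _ (g k).2]
      rw [Matrix.of_apply, h1, h2]
      by_cases hkj : k = j
      · subst hkj
        simp [Basis.equivFun_self, Matrix.diagonal]
      · simp [Basis.equivFun_self, Matrix.diagonal, hkj, Ne.symm hkj]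
    rw [hD]
    simp only [hmat, Matrix.det_diagonal]
    rw [abs_pos]
    exact Finset.prod_ne_zero_iff.2 fun k _ => inv_ne_zero (hNg k).ne'
  obtain ⟨bs, hbsK, hmax⟩ := hKcompact.exists_isMaxOn ⟨b₀, hb₀K⟩ hDcont.continuousOn
  have hDbs : 0 < D bs := lt_of_lt_of_le hDb₀ (hmax hb₀K)
  have hbsX : ∀ k, bs k ∈ X := fun k => (hbsK k (Set.mem_univ k)).1
  have hbsN : ∀ k, N (bs k) ≤ 1 := fun k => (hbsK k (Set.mem_univ k)).2
  set A : Matrix (Fin m) (Fin m) ℝ := Matrix.of fun k j => π (bs k) j with hA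
  have hdetA : A.det ≠ 0 := by
    intro h
    rw [hD] at hDbs
    simp only [← hA, h, abs_zero] at hDbs
    exact lt_irrefl 0 hDbs
  refine ⟨fun i => w i * ∑ k, |bs k i|, ?_, ?_, ?_⟩
  · intro i
    exact mul_nonneg (hw i).le (Finset.sum_nonneg fun k _ => abs_nonneg _)
  · calc ∑ i, w i * ∑ k, |bs k i| = ∑ i, ∑ k, w i * |bs k i| := by
          exact Finset.sum_congr rfl fun i _ => Finset.mul_sum _ _ _
      _ = ∑ k, ∑ i, w i * |bs k i| := Finset.sum_comm
      _ = ∑ k : Fin m, N (bs k) := rfl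
      _ ≤ ∑ k : Fin m, (1:ℝ) := Finset.sum_le_sum fun k _ => hbsN k
      _ = (m : ℝ) := by simp
  · intro x hx i
    show w i * |x i| ≤ (w i * ∑ k, |bs k i|) * ∑ l, w l * |x l|
    rcases eq_or_lt_of_le (hN0 x) with h0 | hNx
    · have hx0 : x = 0 := hNzero x h0.symm
      have hR : (0:ℝ) ≤ (w i * ∑ k, |bs k i|) * ∑ l, w l * |x l| :=
        mul_nonneg (mul_nonneg (hw i).le (Finset.sum_nonneg fun k _ => abs_nonneg _)) (hN0 x)
      have hL : w i * |x i| = 0 := by rw [hx0]; simp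
      linarith
    -- scale
    have key : ∀ x' : Fin n → ℝ, x' ∈ X → N x' ≤ 1 → |x' i| ≤ ∑ k, |bs k i| := by
      intro x' hx' hNx'
      set y : Fin m → ℝ := π x' with hy
      set c : Fin m → ℝ := Matrix.vecMul y A⁻¹ with hc
      have hcA : Matrix.vecMul c A = y := by
        rw [hc, Matrix.vecMul_vecMul, Matrix.nonsing_inv_mul A (isUnit_iff_ne_zero.2 hdetA),
          Matrix.vecMul_one]
      have hrepr : x' = ∑ k, c k • bs k := by
        apply hπinj _ _ hx' (Submodule.sum_mem X fun k _ => Submodule.smul_mem X _ (hbsX k))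
        rw [map_sum]
        funext j
        simp only [Finset.sum_apply, map_smul, Pi.smul_apply, smul_eq_mul]
        have : ∀ k, π (bs k) j = A k j := fun k => rfl
        calc π x' j = y j := rfl
          _ = Matrix.vecMul c A j := by rw [hcA]
          _ = ∑ k, c k * A k j := by rw [Matrix.vecMul]; rfl
          _ = ∑ k, c k * π (bs k) j := rfl
      have hck : ∀ k, |c k| ≤ 1 := by
        intro k
        set b' : Fin m → (Fin n → ℝ) := Function.update bs k x' with hb'
        have hb'K : b' ∈ K := by
          intro k' _
          by_cases hkk : k' = k
          · subst hkk; rw [hb', Function.update_self]; exact ⟨hx', hNx'⟩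
          · rw [hb', Function.update_of_ne hkk]; exact ⟨hbsX k', hbsN k'⟩
        have hDb' : D b' ≤ D bs := hmax hb'K
        have hmatb' : (Matrix.of fun k' j => π (b' k') j) = A.updateRow k y := by
          ext k' j
          by_cases hkk : k' = k
          · subst hkk
            simp [hb', Function.update_self, Matrix.updateRow_self, hy]
          · simp [hb', Function.update_of_ne hkk, Matrix.updateRow_ne hkk, hA]
        have hyrow : y = ∑ k', c k' • A k' := by
          funext j
          rw [← hcA]
          simp only [Finset.sum_apply, Pi.smul_apply, smul_eq_mul]
          rw [Matrix.vecMul]; rfl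
        have hdet : (A.updateRow k y).det = c k * A.det := by
          rw [hyrow, Matrix.det_updateRow_sum]
          simp
        have : |c k| * |A.det| ≤ |A.det| := by
          calc |c k| * |A.det| = |(A.updateRow k y).det| := by rw [hdet, abs_mul]
            _ = D b' := by rw [hD]; congr 1; rw [hmatb']
            _ ≤ D bs := hDb'
            _ = |A.det| := by rw [hD]
        have habs : 0 < |A.det| := abs_pos.2 hdetA
        exact le_of_mul_le_mul_right (by linarith) habs
      calc |x' i| = |∑ k, c k * bs k i| := by
            rw [hrepr]; congr 1; simp [Finset.sum_apply]
        _ ≤ ∑ k, |c k * bs k i| := Finset.abs_sum_le_sum_abs _ _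
        _ ≤ ∑ k, |bs k i| := Finset.sum_le_sum fun k _ => by
            rw [abs_mul]
            calc |c k| * |bs k i| ≤ 1 * |bs k i| :=
                  mul_le_mul_of_nonneg_right (hck k) (abs_nonneg _)
              _ = |bs k i| := one_mul _
    -- apply to the scaled vector
    set x' : Fin n → ℝ := (N x)⁻¹ • x with hx'
    have hx'X : x' ∈ X := Submodule.smul_mem X _ hx
    have hNx' : N x' = 1 := by
      rw [hx', hNsmul, abs_of_nonneg (inv_nonneg.2 (hN0 x)), inv_mul_cancel₀ hNx.ne']
    have h1 := key x' hx'X hNx'.le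
    have h2 : |x' i| = (N x)⁻¹ * |x i| := by
      rw [hx']
      simp [abs_mul, abs_of_nonneg (inv_nonneg.2 (hN0 x))]
    rw [h2] at h1
    have h3 : w i * |x i| ≤ (w i * ∑ k, |bs k i|) * N x := by
      have := mul_le_mul_of_nonneg_left h1 (hw i).le
      have h4 : w i * ((N x)⁻¹ * |x i|) * N x ≤ w i * (∑ k, |bs k i|) * N x :=
        mul_le_mul_of_nonneg_right this (hN0 x)
      calc w i * |x i| = w i * ((N x)⁻¹ * |x i|) * N x := by
            field_simp
          _ ≤ w i * (∑ k, |bs k i|) * N x := h4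
          _ = (w i * ∑ k, |bs k i|) * N x := by ring
    exact h3

lemma key {n : ℕ} (w : Fin n → ℝ) (hw : ∀ i, 0 < w i) (W₀ : Submodule ℝ E) (f₀ : E)
    (p : Fin n → E) (hp : ∀ l, p l - f₀ ∈ W₀) :
    ∃ t : Fin n → ℝ, (∀ i, 0 ≤ t i) ∧ (∑ i, t i ≤ (Module.finrank ℝ W₀ : ℝ) + 1) ∧
      ∀ (W : Submodule ℝ E) (f : E) (i : Fin n),
        w i * Metric.infDist (p i) (AffineSubspace.mk' f W : Set E) ≤
          t i * ∑ l, w l * Metric.infDist (p l) (AffineSubspace.mk' f W : Set E) := by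
  classical
  set q : Fin n → W₀ := fun l => ⟨p l - f₀, hp l⟩ with hq
  let Ψ : ((W₀ →ₗ[ℝ] ℝ) × ℝ) →ₗ[ℝ] (Fin n → ℝ) :=
    { toFun := fun z => fun l => z.1 (q l) + z.2
      map_add' := by intro a b; funext l; simp [LinearMap.add_apply]; ring
      map_smul' := by intro c a; funext l; simp [LinearMap.smul_apply]; ring }
  set X : Submodule ℝ (Fin n → ℝ) := LinearMap.range Ψ with hX
  have hrank : (Module.finrank ℝ X : ℝ) ≤ (Module.finrank ℝ W₀ : ℝ) + 1 := by
    have h1 : Module.finrank ℝ X ≤ Module.finrank ℝ ((W₀ →ₗ[ℝ] ℝ) × ℝ) :=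
      LinearMap.finrank_range_le Ψ
    have h2 : Module.finrank ℝ ((W₀ →ₗ[ℝ] ℝ) × ℝ) = Module.finrank ℝ W₀ + 1 := by
      rw [Module.finrank_prod]
      congr 1
      · exact Subspace.dual_finrank_eq
      · exact Module.finrank_self ℝ
    rw [h2] at h1
    exact_mod_cast h1
  obtain ⟨t, ht0, htsum, htineq⟩ := auerbach w hw X
  refine ⟨t, ht0, le_trans htsum hrank, ?_⟩
  intro W f i
  set T : E →ₗ[ℝ] E :=
    LinearMap.id - (W.subtype ∘ₗ (orthogonalProjection W : E →L[ℝ] W).toLinearMap) with hT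
  have hTval : ∀ a : E, T a = a - (orthogonalProjection W a : E) := fun a => rfl
  have hR : ∀ a : E, Metric.infDist a (AffineSubspace.mk' f W : Set E) = ‖T (a - f)‖ := by
    intro a
    rw [infDist_mk' W f a, hTval]
  by_cases hzero : T (p i - f) = 0
  · rw [hR (p i), hzero, norm_zero, mul_zero]
    apply mul_nonneg (ht0 i)
    exact Finset.sum_nonneg fun l _ => mul_nonneg (hw l).le Metric.infDist_nonneg
  · set v : E := ‖T (p i - f)‖⁻¹ • T (p i - f) with hv
    have hnv : ‖v‖ = 1 := by
      rw [hv, norm_smul, norm_inv, norm_norm, inv_mul_cancel₀ (norm_ne_zero_iff.2 hzero)]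
    set x : Fin n → ℝ := fun l => (inner ℝ v (T (p l - f)) : ℝ) with hx
    have hxX : x ∈ X := by
      refine ⟨(((innerSL ℝ v).toLinearMap.comp (T.comp W₀.subtype)), (inner ℝ v (T (f₀ - f)) : ℝ)), ?_⟩
      funext l
      show (inner ℝ v (T ((q l : E))) : ℝ) + (inner ℝ v (T (f₀ - f)) : ℝ) = x l
      rw [hx]
      have h1 : (q l : E) = p l - f₀ := rfl
      rw [h1, ← inner_add_right, ← map_add]
      congr 2
      abel
    have hxi : x i = ‖T (p i - f)‖ := by
      rw [hx]
      show (inner ℝ v (T (p i - f)) : ℝ) = _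
      rw [hv, real_inner_smul_left, real_inner_self_eq_norm_sq, sq, ← mul_assoc,
        inv_mul_cancel₀ (norm_ne_zero_iff.2 hzero), one_mul]
    have hxl : ∀ l, |x l| ≤ ‖T (p l - f)‖ := by
      intro l
      calc |x l| ≤ ‖v‖ * ‖T (p l - f)‖ := abs_real_inner_le_norm _ _
        _ = ‖T (p l - f)‖ := by rw [hnv, one_mul]
    have hmain := htineq x hxX i
    rw [hR (p i), ← hxi]
    calc w i * x i ≤ w i * |x i| :=
          mul_le_mul_of_nonneg_left (le_abs_self _) (hw i).le
      _ ≤ t i * ∑ l, w l * |x l| := hmain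
      _ ≤ t i * ∑ l, w l * Metric.infDist (p l) (AffineSubspace.mk' f W : Set E) := by
          apply mul_le_mul_of_nonneg_left _ (ht0 i)
          apply Finset.sum_le_sum
          intro l _
          rw [hR (p l)]
          exact mul_le_mul_of_nonneg_left (hxl l) (hw l).le

lemma exists_superset_finrank :
    ∀ (k : ℕ) (U : Submodule ℝ E), Module.finrank ℝ U + k ≤ d →
      ∃ W : Submodule ℝ E, U ≤ W ∧ Module.finrank ℝ W = Module.finrank ℝ U + k := by
  intro k
  induction k with
  | zero => exact fun U _ => ⟨U, le_refl U, by simp⟩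
  | succ k ih =>
    intro U hU
    obtain ⟨W, hUW, hW⟩ := ih U (by omega)
    have hWlt : Module.finrank ℝ W < Module.finrank ℝ (EuclideanSpace ℝ (Fin d)) := by
      rw [finrank_euclideanSpace_fin, hW]; omega
    have hWne : W ≠ ⊤ := by
      intro h
      rw [h, finrank_top] at hWlt
      exact lt_irrefl _ hWlt
    obtain ⟨v, hv⟩ : ∃ v : E, v ∉ W := by
      by_contra h
      push_neg at h
      exact hWne (Submodule.eq_top_iff'.2 h)
    refine ⟨W ⊔ (ℝ ∙ v), le_trans hUW le_sup_left, ?_⟩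
    have hv0 : v ≠ 0 := fun h => hv (h ▸ W.zero_mem)
    have hinf : W ⊓ (ℝ ∙ v) = ⊥ := by
      rw [Submodule.eq_bot_iff]
      intro x ⟨hxW, hxv⟩
      obtain ⟨c, rfl⟩ := Submodule.mem_span_singleton.1 hxv
      rcases eq_or_ne c 0 with hc | hc
      · simp [hc]
      · exfalso
        have h2 := W.smul_mem c⁻¹ hxW
        rw [smul_smul, inv_mul_cancel₀ hc, one_smul] at h2
        exact hv h2
    have := Submodule.finrank_sup_add_finrank_inf_eq W (ℝ ∙ v)
    rw [hinf, finrank_bot, add_zero, finrank_span_singleton hv0] at this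
    omega

lemma dichotomy {j n : ℕ} (hn : 0 < n) (hjd : j + 1 ≤ d) (s : Fin n → E) (w : Fin n → ℝ)
    (hw : ∀ i, 0 < w i) :
    (∃ (W₀ : Submodule ℝ E) (f₀ : E), Module.finrank ℝ W₀ = j ∧ ∀ l, s l - f₀ ∈ W₀) ∨
    (∃ c : ℝ, 0 < c ∧ ∀ (W : Submodule ℝ E) (f : E), Module.finrank ℝ W = j →
        c ≤ ∑ l, w l * Metric.infDist (s l) (AffineSubspace.mk' f W : Set E)) := by
  classical
  set i₀ : Fin n := ⟨0, hn⟩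
  set U : Submodule ℝ E := Submodule.span ℝ (Set.range fun l => s l - s i₀) with hUdef
  by_cases hdim : Module.finrank ℝ U ≤ j
  · left
    obtain ⟨W₀, hUW₀, hW₀⟩ := exists_superset_finrank (j - Module.finrank ℝ U) U (by omega)
    refine ⟨W₀, s i₀, by omega, fun l => hUW₀ (Submodule.subset_span ⟨l, rfl⟩)⟩
  · right
    push_neg at hdim
    -- extract j+1 linearly independent difference vectors
    obtain ⟨b, hbsub, hbspan, hbindep⟩ :=
      exists_linearIndependent ℝ (Set.range fun l => s l - s i₀)
    have hbfin : b.Finite := Set.Finite.subset (Set.finite_range _) hbsub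
    have hbfintype : Fintype b := hbfin.fintype
    have hcard : j + 1 ≤ Fintype.card b := by
      have h1 : Module.finrank ℝ U = Fintype.card b := by
        rw [hUdef, ← hbspan]
        rw [finrank_span_set_eq_card hbindep]
        exact (Set.toFinset_card b).symm ▸ rfl
      omega
    obtain ⟨emb⟩ : Nonempty (Fin (j + 1) ↪ b) := by
      apply Function.Embedding.nonempty_of_card_le
      simpa using hcard
    set v : Fin (j+1) → E := fun k => ((emb k : b) : E) with hvdef
    have hvindep : LinearIndependent ℝ v := hbindep.comp emb emb.injective
    have hvdiff : ∀ k, ∃ l, s l - s i₀ = v k := fun k => hbsub (emb k).2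
    choose lk hlk using hvdiff
    set g : (Fin (j+1) → ℝ) → ℝ := fun x => ‖∑ k, x k • v k‖ with hg
    have hgcont : Continuous g := by
      apply Continuous.norm
      apply continuous_finset_sum
      intro k _
      exact (continuous_apply k).smul continuous_const
    have hsph : (Metric.sphere (0 : Fin (j+1) → ℝ) 1).Nonempty :=
      NormedSpace.sphere_nonempty.2 zero_le_one
    obtain ⟨x₀, hx₀mem, hx₀min⟩ :=
      (isCompact_sphere (0 : Fin (j+1) → ℝ) 1).exists_isMinOn hsph hgcont.continuousOn
    have hx₀norm : ‖x₀‖ = 1 := by rwa [mem_sphere_zero_iff_norm] at hx₀mem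
    have hgpos : 0 < g x₀ := by
      rcases (norm_nonneg (∑ k, x₀ k • v k)).lt_or_eq with h | h
      · exact h
      · exfalso
        have hsum : ∑ k, x₀ k • v k = 0 := norm_eq_zero.1 h.symm
        have := Fintype.linearIndependent_iff.1 hvindep x₀ hsum
        have hx0 : x₀ = 0 := funext this
        rw [hx0, norm_zero] at hx₀norm
        exact zero_ne_one hx₀norm
    set B : ℝ := ∑ k : Fin (j+1), (1 / w (lk k) + 1 / w i₀) with hB
    have hBpos : 0 < B := by
      apply Finset.sum_pos
      · intro k _
        have h1 := hw (lk k); have h2 := hw i₀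
        positivity
      · exact Finset.univ_nonempty
    refine ⟨g x₀ / B, div_pos hgpos hBpos, ?_⟩
    intro W f hWj
    set F : Set E := (AffineSubspace.mk' f W : Set E) with hF
    set cost : ℝ := ∑ l, w l * Metric.infDist (s l) F with hcost
    have hcost0 : 0 ≤ cost :=
      Finset.sum_nonneg fun l _ => mul_nonneg (hw l).le Metric.infDist_nonneg
    have hinfle : ∀ l, Metric.infDist (s l) F ≤ cost / w l := by
      intro l
      rw [le_div_iff₀ (hw l)]
      rw [mul_comm]
      exact Finset.single_le_sum (f := fun l => w l * Metric.infDist (s l) F)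
        (fun l _ => mul_nonneg (hw l).le Metric.infDist_nonneg) (Finset.mem_univ l)
    -- the projections of the v k are linearly dependent in W
    have hnotind : ¬ LinearIndependent ℝ (fun k => (orthogonalProjection W (v k))) := by
      intro hind
      have := LinearIndependent.fintype_card_le_finrank (R := ℝ) (M := W) hind
      rw [hWj] at this
      simp at this
    rw [Fintype.linearIndependent_iff] at hnotind
    push_neg at hnotind
    obtain ⟨x, hxsum, k₀, hk₀⟩ := hnotind
    have hxne : x ≠ 0 := fun h => hk₀ (by rw [h]; rfl)
    have hxnorm : ‖x‖ ≠ 0 := norm_ne_zero_iff.2 hxne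
    set y : Fin (j+1) → ℝ := ‖x‖⁻¹ • x with hy
    have hynorm : ‖y‖ = 1 := by
      rw [hy, norm_smul, norm_inv, norm_norm, inv_mul_cancel₀ hxnorm]
    have hysum : ∑ k, y k • (orthogonalProjection W (v k)) = 0 := by
      have : ∑ k, y k • (orthogonalProjection W (v k)) =
          ‖x‖⁻¹ • ∑ k, x k • (orthogonalProjection W (v k)) := by
        rw [Finset.smul_sum]
        apply Finset.sum_congr rfl
        intro k _
        rw [hy]
        simp [smul_smul]
      rw [this, hxsum, smul_zero]
    have hymem : y ∈ Metric.sphere (0 : Fin (j+1) → ℝ) 1 := by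
      rwa [mem_sphere_zero_iff_norm]
    have hgy : g x₀ ≤ g y := hx₀min hymem
    -- bound g y by distances
    have hgapp : ∀ x : Fin (j+1) → ℝ, g x = ‖∑ k, x k • v k‖ := fun _ => rfl
    set ak : Fin (j+1) → E := fun k => ((orthogonalProjection W (v k) : W) : E) with hak
    have hak2 : ∀ k, ((orthogonalProjection W (v k) : W) : E) = ak k := fun k => rfl
    have hcoe0 : ∑ k, y k • ak k = 0 := by
      have h1 := congrArg (W.subtype) hysum
      simp only [map_sum, map_smul, map_zero, Submodule.coe_subtype] at h1
      simpa only [hak2] using h1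
    have hgyeq : g y = ‖∑ k, y k • (v k - ak k)‖ := by
      rw [hgapp]
      congr 1
      have h2 : ∑ k, y k • (v k - ak k) =
          (∑ k, y k • v k) - ∑ k, y k • ak k := by
        rw [← Finset.sum_sub_distrib]
        exact Finset.sum_congr rfl fun k _ => smul_sub _ _ _
      rw [h2, hcoe0, sub_zero]
    have hT : ∀ a : E, Metric.infDist a F =
        ‖(a - f) - (orthogonalProjection W (a - f) : E)‖ := fun a => infDist_mk' W f a
    have hdistbound : ∀ k, ‖v k - ak k‖ ≤
        Metric.infDist (s (lk k)) F + Metric.infDist (s i₀) F := by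
      intro k
      have hvk : v k = (s (lk k) - f) - (s i₀ - f) := by rw [← hlk k]; abel
      have hPsub : (orthogonalProjection W (v k) : W) =
          orthogonalProjection W (s (lk k) - f) - orthogonalProjection W (s i₀ - f) := by
        rw [hvk, map_sub]
      have hakk : ak k = (orthogonalProjection W (s (lk k) - f) : E) -
          (orthogonalProjection W (s i₀ - f) : E) := by
        rw [← hak2 k, hPsub]
        push_cast
        ring_nf
      have hdecomp : v k - ak k =
          ((s (lk k) - f) - (orthogonalProjection W (s (lk k) - f) : E)) -
          ((s i₀ - f) - (orthogonalProjection W (s i₀ - f) : E)) := by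
        rw [hvk, hakk]
        abel
      rw [hdecomp, hT (s (lk k)), hT (s i₀)]
      exact norm_sub_le _ _
    have hgyle : g y ≤ cost * B := by
      rw [hgyeq]
      calc ‖∑ k, y k • (v k - ak k)‖
          ≤ ∑ k, ‖y k • (v k - ak k)‖ := norm_sum_le _ _
        _ ≤ ∑ k, (Metric.infDist (s (lk k)) F + Metric.infDist (s i₀) F) := by
            apply Finset.sum_le_sum
            intro k _
            rw [norm_smul]
            have h1 : ‖y k‖ ≤ 1 := by
              calc ‖y k‖ ≤ ‖y‖ := norm_le_pi_norm y k
                _ = 1 := hynorm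
            calc ‖y k‖ * ‖v k - ak k‖ ≤ 1 * ‖v k - ak k‖ :=
                  mul_le_mul_of_nonneg_right h1 (norm_nonneg _)
              _ = ‖v k - ak k‖ := one_mul _
              _ ≤ Metric.infDist (s (lk k)) F + Metric.infDist (s i₀) F := hdistbound k
        _ ≤ ∑ k : Fin (j+1), (cost / w (lk k) + cost / w i₀) := by
            apply Finset.sum_le_sum
            intro k _
            exact add_le_add (hinfle (lk k)) (hinfle i₀)
        _ = cost * B := by
            rw [hB, Finset.mul_sum]
            apply Finset.sum_congr rfl
            intro k _
            rw [mul_add, mul_one_div, mul_one_div]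
    rw [div_le_iff₀ hBpos]
    calc g x₀ ≤ g y := hgy
      _ ≤ cost * B := hgyle

lemma flat_of_mk' {j : ℕ} (W : Submodule ℝ E) (f : E) (hWj : Module.finrank ℝ W = j) :
    IsJFlat j (AffineSubspace.mk' f W : Set E) := by
  refine ⟨⟨f, AffineSubspace.self_mem_mk' f W⟩, AffineSubspace.mk' f W, rfl, ?_⟩
  rw [AffineSubspace.direction_mk']
  exact hWj

lemma flat_repr {j : ℕ} (F : Set E) (hF : IsJFlat j F) :
    ∃ (W : Submodule ℝ E) (f : E), Module.finrank ℝ W = j ∧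
      F = (AffineSubspace.mk' f W : Set E) := by
  obtain ⟨⟨x, hx⟩, Waff, hcoe, hdim⟩ := hF
  refine ⟨Waff.direction, x, hdim, ?_⟩
  have hxW : x ∈ Waff := by rw [← AffineSubspace.mem_coe, hcoe]; exact hx
  rw [← hcoe]
  exact congrArg (fun (A : AffineSubspace ℝ (EuclideanSpace ℝ (Fin d))) => (A : Set (EuclideanSpace ℝ (Fin d)))) (AffineSubspace.mk'_eq hxW).symm

end Aux

/-- The total sensitivity of the weighted `j`-flat-median problem is `O(j^{3/2})`. -/
theorem stmt8 :
    ∃ C : ℝ, 0 < C ∧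
      ∀ (d j n : ℕ) (s : Fin n → EuclideanSpace ℝ (Fin d)) (w : Fin n → ℝ),
        2 ≤ d → 1 ≤ j → j + 1 ≤ d → (∀ i, 0 < w i) →
        (∑ i, sInf {β : ℝ | 0 ≤ β ∧
            ∀ F : Set (EuclideanSpace ℝ (Fin d)), IsJFlat j F →
              w i * Metric.infDist (s i) F ≤ β * ∑ l, w l * Metric.infDist (s l) F})
          ≤ C * (j : ℝ) ^ ((3:ℝ)/2) := by
  classical
  refine ⟨8, by norm_num, ?_⟩
  intro d j n s w hd hj hjd hw
  have hj1 : (1:ℝ) ≤ (j:ℝ) := by exact_mod_cast hj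
  have hjrpow : (j:ℝ) ≤ (j:ℝ) ^ ((3:ℝ)/2) := by
    calc (j:ℝ) = (j:ℝ) ^ (1:ℝ) := (Real.rpow_one _).symm
      _ ≤ (j:ℝ) ^ ((3:ℝ)/2) := Real.rpow_le_rpow_of_exponent_le hj1 (by norm_num)
  have hfinal : (3:ℝ) * j + 5 ≤ 8 * (j:ℝ) ^ ((3:ℝ)/2) := by nlinarith
  set SI : Fin n → Set ℝ := fun i => {β : ℝ | 0 ≤ β ∧
      ∀ F : Set (EuclideanSpace ℝ (Fin d)), IsJFlat j F →
        w i * Metric.infDist (s i) F ≤ β * ∑ l, w l * Metric.infDist (s l) F} with hSI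
  have hSIbdd : ∀ i, BddBelow (SI i) := fun i => ⟨0, fun β hβ => hβ.1⟩
  rcases Nat.eq_zero_or_pos n with hn | hn
  · subst hn
    rw [Finset.univ_eq_empty, Finset.sum_empty]
    positivity
  rcases dichotomy hn hjd s w hw with ⟨W₀, f₀, hW₀j, hmem⟩ | ⟨c, hc, hlow⟩
  · -- all points lie in a j-flat
    obtain ⟨t, ht0, htsum, htq⟩ := key w hw W₀ f₀ s hmem
    have hσ : ∀ i, sInf (SI i) ≤ t i := by
      intro i
      apply csInf_le (hSIbdd i)
      refine ⟨ht0 i, ?_⟩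
      intro F hF
      obtain ⟨W, f, hWj, rfl⟩ := flat_repr F hF
      exact htq W f i
    calc ∑ i, sInf (SI i) ≤ ∑ i, t i := Finset.sum_le_sum fun i _ => hσ i
      _ ≤ (Module.finrank ℝ W₀ : ℝ) + 1 := htsum
      _ = (j:ℝ) + 1 := by rw [hW₀j]
      _ ≤ 3 * (j:ℝ) + 5 := by linarith
      _ ≤ 8 * (j:ℝ) ^ ((3:ℝ)/2) := hfinal
  · -- no j-flat contains all the points; use a near-optimal flat
    set CS : Set ℝ := {r | ∃ (W : Submodule ℝ (EuclideanSpace ℝ (Fin d)))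
        (f : EuclideanSpace ℝ (Fin d)), Module.finrank ℝ W = j ∧
        r = ∑ l, w l * Metric.infDist (s l) (AffineSubspace.mk' f W : Set _)} with hCS
    have hCSne : CS.Nonempty := by
      obtain ⟨W, -, hW⟩ := exists_superset_finrank j (⊥ : Submodule ℝ (EuclideanSpace ℝ (Fin d)))
        (by rw [finrank_bot]; omega)
      rw [finrank_bot, zero_add] at hW
      exact ⟨_, W, 0, hW, rfl⟩
    have hCSlb : ∀ r ∈ CS, c ≤ r := by
      rintro r ⟨W, f, hWj, rfl⟩
      exact hlow W f hWj
    set c₀ : ℝ := sInf CS with hc₀def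
    have hc₀ : c ≤ c₀ := le_csInf hCSne hCSlb
    have hc₀pos : 0 < c₀ := lt_of_lt_of_le hc hc₀
    obtain ⟨r₁, hr₁CS, hr₁lt⟩ := exists_lt_of_csInf_lt hCSne (show c₀ < 2*c₀ by linarith)
    obtain ⟨W₁, f₁, hW₁j, hr₁⟩ := hr₁CS
    set p : Fin n → EuclideanSpace ℝ (Fin d) :=
      fun l => f₁ + (orthogonalProjection W₁ (s l - f₁) : EuclideanSpace ℝ (Fin d)) with hp
    have hpmem : ∀ l, p l - f₁ ∈ W₁ := by
      intro l
      have : p l - f₁ = (orthogonalProjection W₁ (s l - f₁) : EuclideanSpace ℝ (Fin d)) := by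
        rw [hp]; exact add_sub_cancel_left _ _
      rw [this]
      exact (orthogonalProjection W₁ (s l - f₁)).2
    have hdistp : ∀ l, dist (s l) (p l) =
        Metric.infDist (s l) (AffineSubspace.mk' f₁ W₁ : Set _) := by
      intro l
      rw [infDist_mk' W₁ f₁ (s l), dist_eq_norm]
      congr 1
      rw [hp]
      exact sub_add_eq_sub_sub _ _ _
    have hr₁eq : r₁ = ∑ l, w l * dist (s l) (p l) := by
      rw [hr₁]
      exact Finset.sum_congr rfl fun l _ => by rw [hdistp l]
    have hr₁pos : 0 < r₁ :=
      lt_of_lt_of_le hc (le_of_le_of_eq (hlow W₁ f₁ hW₁j) hr₁.symm)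
    obtain ⟨t, ht0, htsum, htq⟩ := key w hw W₁ f₁ p hpmem
    set β : Fin n → ℝ := fun i => 2 * (w i * dist (s i) (p i)) / r₁ + 3 * t i with hβ
    have hσ : ∀ i, sInf (SI i) ≤ β i := by
      intro i
      apply csInf_le (hSIbdd i)
      constructor
      · apply add_nonneg
        · apply div_nonneg _ hr₁pos.le
          have := hw i
          positivity
        · linarith [ht0 i]
      intro F hF
      obtain ⟨W, f, hWj, rfl⟩ := flat_repr F hF
      set cost : ℝ := ∑ l, w l * Metric.infDist (s l) (AffineSubspace.mk' f W : Set _)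
        with hcost
      have hcostCS : cost ∈ CS := ⟨W, f, hWj, rfl⟩
      have hcostge : c₀ ≤ cost := csInf_le ⟨c, hCSlb⟩ hcostCS
      have hr₁cost : r₁ < 2 * cost := lt_of_lt_of_le hr₁lt (by linarith)
      have hstep1 : w i * Metric.infDist (s i) (AffineSubspace.mk' f W : Set _) ≤
          w i * (Metric.infDist (p i) (AffineSubspace.mk' f W : Set _) + dist (s i) (p i)) := by
        apply mul_le_mul_of_nonneg_left _ (hw i).le
        exact Metric.infDist_le_infDist_add_dist
      have hstep2 : w i * Metric.infDist (p i) (AffineSubspace.mk' f W : Set _) ≤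
          t i * ∑ l, w l * Metric.infDist (p l) (AffineSubspace.mk' f W : Set _) := htq W f i
      have hstep3 : ∑ l, w l * Metric.infDist (p l) (AffineSubspace.mk' f W : Set _) ≤
          3 * cost := by
        have h1 : ∀ l, w l * Metric.infDist (p l) (AffineSubspace.mk' f W : Set _) ≤
            w l * Metric.infDist (s l) (AffineSubspace.mk' f W : Set _) +
            w l * dist (s l) (p l) := by
          intro l
          rw [← mul_add]
          apply mul_le_mul_of_nonneg_left _ (hw l).le
          calc Metric.infDist (p l) (AffineSubspace.mk' f W : Set _) ≤
              Metric.infDist (s l) (AffineSubspace.mk' f W : Set _) + dist (p l) (s l) :=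
                Metric.infDist_le_infDist_add_dist
            _ = Metric.infDist (s l) (AffineSubspace.mk' f W : Set _) + dist (s l) (p l) := by
                rw [dist_comm]
        calc ∑ l, w l * Metric.infDist (p l) (AffineSubspace.mk' f W : Set _)
            ≤ ∑ l, (w l * Metric.infDist (s l) (AffineSubspace.mk' f W : Set _) +
              w l * dist (s l) (p l)) := Finset.sum_le_sum fun l _ => h1 l
          _ = cost + r₁ := by rw [Finset.sum_add_distrib, ← hcost, ← hr₁eq]
          _ ≤ 3 * cost := by linarith
      have hwd : w i * dist (s i) (p i) ≤ (2 * (w i * dist (s i) (p i)) / r₁) * cost := by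
        rw [div_mul_eq_mul_div, le_div_iff₀ hr₁pos]
        have hwd0 : 0 ≤ w i * dist (s i) (p i) := mul_nonneg (hw i).le dist_nonneg
        nlinarith
      calc w i * Metric.infDist (s i) (AffineSubspace.mk' f W : Set _)
          ≤ w i * Metric.infDist (p i) (AffineSubspace.mk' f W : Set _) +
            w i * dist (s i) (p i) := by rw [← mul_add] at *; exact hstep1
        _ ≤ t i * (3 * cost) + (2 * (w i * dist (s i) (p i)) / r₁) * cost := by
            apply add_le_add _ hwd
            exact le_trans hstep2 (mul_le_mul_of_nonneg_left hstep3 (ht0 i))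
        _ = β i * cost := by rw [hβ]; ring
    have hsumβ : ∑ i, β i ≤ 3 * (j:ℝ) + 5 := by
      rw [hβ]
      rw [Finset.sum_add_distrib]
      have h1 : ∑ i, 2 * (w i * dist (s i) (p i)) / r₁ = 2 := by
        rw [← Finset.sum_div]
        rw [show ∑ i, 2 * (w i * dist (s i) (p i)) = 2 * ∑ i, w i * dist (s i) (p i) by
          rw [Finset.mul_sum]]
        rw [← hr₁eq, mul_div_assoc, div_self hr₁pos.ne', mul_one]
      have h2 : ∑ i, 3 * t i ≤ 3 * ((j:ℝ) + 1) := by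
        rw [← Finset.mul_sum]
        apply mul_le_mul_of_nonneg_left _ (by norm_num)
        calc ∑ i, t i ≤ (Module.finrank ℝ W₁ : ℝ) + 1 := htsum
          _ = (j:ℝ) + 1 := by rw [hW₁j]
      rw [h1]
      linarith
    calc ∑ i, sInf (SI i) ≤ ∑ i, β i := Finset.sum_le_sum fun i _ => hσ i
      _ ≤ 3 * (j:ℝ) + 5 := hsumβ
      _ ≤ 8 * (j:ℝ) ^ ((3:ℝ)/2) := hfinal
end

section
/- Let 0 ≤ ε ≤ 1, let 𝒫 be an existential instance of points s₁,…,sₙ ∈ ℝ^d with probabilities p₁,…,pₙ, let f : {s₁,…,sₙ} → [0,∞), and let O ⊆ {1,…,n} satisfy Σ_{i∈O} pᵢ ≤ ε. For a realization P, let Z(P) = max_{sᵢ∈P} f(sᵢ) (with Z(∅) = 0), and let Ē denote the event that P contains at least one point sᵢ with i ∈ O. Then (1−ε)·Σ_{i∈O} pᵢ·f(sᵢ) ≤ E_{P∼𝒫}[Z(P)·1_{Ē}(P)] ≤ Σ_{i∈O} pᵢ·f(sᵢ) + ε·E_{P∼𝒫}[Z(P)]. -/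
open Finset

/-- weight of subset `B` of ground set `S` -/
noncomputable def wgt {n : ℕ} (p : Fin n → ℝ) (S B : Finset (Fin n)) : ℝ :=
  (∏ i ∈ B, p i) * ∏ i ∈ S \ B, (1 - p i)

section aux
variable {n : ℕ} {p : Fin n → ℝ}

lemma wgt_nonneg (hp0 : ∀ i, 0 ≤ p i) (hp1 : ∀ i, p i ≤ 1) (S B : Finset (Fin n)) :
    0 ≤ wgt p S B :=
  mul_nonneg (prod_nonneg fun i _ => hp0 i)
    (prod_nonneg fun i _ => by linarith [hp1 i])

lemma sum_wgt (p : Fin n → ℝ) (S : Finset (Fin n)) : ∑ B ∈ S.powerset, wgt p S B = 1 := by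
  calc ∑ B ∈ S.powerset, wgt p S B
      = ∏ i ∈ S, (p i + (1 - p i)) := (Finset.prod_add _ _ _).symm
    _ = 1 := by simp

lemma wgt_marg {S : Finset (Fin n)} {i : Fin n} (hi : i ∈ S) :
    ∑ B ∈ S.powerset, (if i ∈ B then wgt p S B else 0) = p i := by
  classical
  have hS : S = insert i (S.erase i) := (Finset.insert_erase hi).symm
  rw [hS, Finset.sum_powerset_insert (Finset.notMem_erase i S)]
  have h1 : ∑ B ∈ (S.erase i).powerset,
      (if i ∈ B then wgt p (insert i (S.erase i)) B else 0) = 0 := by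
    apply Finset.sum_eq_zero
    intro B hB
    have : i ∉ B := fun h => Finset.notMem_erase i S (Finset.mem_powerset.mp hB h)
    simp [this]
  rw [h1, zero_add]
  have h2 : ∀ B ∈ (S.erase i).powerset,
      (if i ∈ insert i B then wgt p (insert i (S.erase i)) (insert i B) else 0)
        = p i * wgt p (S.erase i) B := by
    intro B hB
    have hiB : i ∉ B := fun h => Finset.notMem_erase i S (Finset.mem_powerset.mp hB h)
    rw [if_pos (mem_insert_self _ _)]
    unfold wgt
    rw [Finset.prod_insert hiB]
    have hset : insert i (S.erase i) \ insert i B = S.erase i \ B := by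
      ext x
      simp only [Finset.mem_sdiff, Finset.mem_insert, Finset.mem_erase]
      constructor
      · rintro ⟨h1, h2⟩
        push_neg at h2
        rcases h1 with rfl | h1
        · exact absurd rfl h2.1
        · exact ⟨h1, h2.2⟩
      · rintro ⟨⟨hxi, hxS⟩, hxB⟩
        exact ⟨Or.inr ⟨hxi, hxS⟩, by push_neg; exact ⟨hxi, hxB⟩⟩
    rw [hset]; ring
  rw [Finset.sum_congr rfl h2, ← Finset.mul_sum, sum_wgt, mul_one]

lemma sum_wgt_mul (p : Fin n → ℝ) (S : Finset (Fin n)) (f : Fin n → ℝ) :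
    ∑ B ∈ S.powerset, wgt p S B * (∑ i ∈ B, f i) = ∑ i ∈ S, p i * f i := by
  classical
  have key : ∀ B ∈ S.powerset, wgt p S B * (∑ i ∈ B, f i)
      = ∑ i ∈ S, (if i ∈ B then wgt p S B * f i else 0) := by
    intro B hB
    rw [Finset.mul_sum, Finset.sum_ite_mem, Finset.inter_eq_right.mpr (Finset.mem_powerset.mp hB)]
  rw [Finset.sum_congr rfl key, Finset.sum_comm]
  refine Finset.sum_congr rfl fun i hi => ?_
  have : ∑ B ∈ S.powerset, (if i ∈ B then wgt p S B * f i else 0)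
       = (∑ B ∈ S.powerset, (if i ∈ B then wgt p S B else 0)) * f i := by
    rw [Finset.sum_mul]
    refine Finset.sum_congr rfl fun B _ => ?_
    split <;> simp
  rw [this, wgt_marg hi]


lemma inter_union_sdiff_self (A O : Finset (Fin n)) : A ∩ O ∪ A \ O = A := by
  ext x; simp only [Finset.mem_union, Finset.mem_inter, Finset.mem_sdiff]; tauto

lemma sum_split (O : Finset (Fin n)) (F : Finset (Fin n) → ℝ) :
    ∑ A : Finset (Fin n), F A
      = ∑ B ∈ O.powerset, ∑ C ∈ Oᶜ.powerset, F (B ∪ C) := by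
  classical
  rw [← Finset.sum_product']
  refine Finset.sum_nbij' (fun A => (A ∩ O, A \ O)) (fun BC => BC.1 ∪ BC.2) ?_ ?_ ?_ ?_ ?_
  · intro A _
    simp only [Finset.mem_product, Finset.mem_powerset]
    refine ⟨Finset.inter_subset_right, fun x hx => ?_⟩
    simp only [Finset.mem_sdiff] at hx
    simpa using hx.2
  · intro BC _; exact Finset.mem_univ _
  · intro A _
    exact inter_union_sdiff_self A O
  · intro BC hBC
    simp only [Finset.mem_product, Finset.mem_powerset] at hBC
    obtain ⟨h1, h2⟩ := hBC
    have hBO : ∀ x ∈ BC.1, x ∈ O := fun x hx => h1 hx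
    have hCO : ∀ x ∈ BC.2, x ∉ O := fun x hx => by simpa using h2 hx
    have e1 : (BC.1 ∪ BC.2) ∩ O = BC.1 := by
      ext x
      simp only [Finset.mem_inter, Finset.mem_union]
      constructor
      · rintro ⟨h | h, hxO⟩
        · exact h
        · exact absurd hxO (hCO x h)
      · intro h; exact ⟨Or.inl h, hBO x h⟩
    have e2 : (BC.1 ∪ BC.2) \ O = BC.2 := by
      ext x
      simp only [Finset.mem_sdiff, Finset.mem_union]
      constructor
      · rintro ⟨h | h, hxO⟩
        · exact absurd (hBO x h) hxO
        · exact h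
      · intro h; exact ⟨Or.inr h, hCO x h⟩
    simp only [e1, e2]
  · intro A _
    simp only []
    rw [inter_union_sdiff_self A O]

lemma union_inter_eq {O B C : Finset (Fin n)} (hB : B ⊆ O) (hC : C ⊆ Oᶜ) :
    (B ∪ C) ∩ O = B := by
  ext x
  simp only [Finset.mem_inter, Finset.mem_union]
  constructor
  · rintro ⟨h | h, hxO⟩
    · exact h
    · exact absurd hxO (by simpa using hC h)
  · intro h; exact ⟨Or.inl h, hB h⟩

lemma wgt_factor (O : Finset (Fin n)) {B C : Finset (Fin n)} (hB : B ⊆ O) (hC : C ⊆ Oᶜ) :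
    (∏ i ∈ B ∪ C, p i) * (∏ i ∈ (B ∪ C)ᶜ, (1 - p i))
      = wgt p O B * wgt p Oᶜ C := by
  have hd : Disjoint B C := disjoint_compl_right.mono hB hC
  have hd2 : Disjoint (O \ B) (Oᶜ \ C) :=
    disjoint_compl_right.mono (Finset.sdiff_subset) (Finset.sdiff_subset)
  have hcompl : (B ∪ C)ᶜ = (O \ B) ∪ (Oᶜ \ C) := by
    ext x
    have hxB : x ∈ B → x ∈ O := fun h => hB h
    have hxC : x ∈ C → x ∉ O := fun h => by simpa using hC h
    simp only [Finset.mem_compl, Finset.mem_union, Finset.mem_sdiff]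
    by_cases hx : x ∈ O <;> simp [hx] <;> tauto
  rw [Finset.prod_union hd, hcompl, Finset.prod_union hd2]
  unfold wgt; ring

lemma expVal_split (O : Finset (Fin n)) (g : Finset (Fin n) → ℝ) :
    expVal p g = ∑ B ∈ O.powerset, ∑ C ∈ Oᶜ.powerset, wgt p O B * wgt p Oᶜ C * g (B ∪ C) := by
  unfold expVal
  rw [sum_split O (fun A => (∏ i ∈ A, p i) * (∏ i ∈ Aᶜ, (1 - p i)) * g A)]
  refine Finset.sum_congr rfl fun B hB => Finset.sum_congr rfl fun C hC => ?_
  rw [wgt_factor O (Finset.mem_powerset.mp hB) (Finset.mem_powerset.mp hC)]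

lemma sum_wgt_nonempty (p : Fin n → ℝ) (S : Finset (Fin n)) :
    ∑ B ∈ S.powerset, (if B.Nonempty then wgt p S B else 0)
      = 1 - ∏ i ∈ S, (1 - p i) := by
  classical
  have key : ∀ B ∈ S.powerset, (if B.Nonempty then wgt p S B else 0)
      = wgt p S B - (if B = ∅ then wgt p S B else 0) := by
    intro B _
    rcases B.eq_empty_or_nonempty with h | h
    · simp [h]
    · rw [if_pos h, if_neg (Finset.nonempty_iff_ne_empty.mp h), sub_zero]
  rw [Finset.sum_congr rfl key, Finset.sum_sub_distrib, sum_wgt,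
    Finset.sum_ite_eq' S.powerset ∅ (wgt p S), if_pos (Finset.empty_mem_powerset S)]
  unfold wgt
  simp

lemma one_sub_sum_le_prod_one_sub (hp0 : ∀ i, 0 ≤ p i) (hp1 : ∀ i, p i ≤ 1)
    (S : Finset (Fin n)) : 1 - ∑ i ∈ S, p i ≤ ∏ i ∈ S, (1 - p i) := by
  classical
  induction S using Finset.induction_on with
  | empty => simp
  | @insert a s ha ih =>
    rw [Finset.prod_insert ha, Finset.sum_insert ha]
    have hs : 0 ≤ ∑ i ∈ s, p i := Finset.sum_nonneg fun i _ => hp0 i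
    nlinarith [mul_nonneg (sub_nonneg.mpr (hp1 a)) (sub_nonneg.mpr ih),
      mul_nonneg (hp0 a) hs]

end aux

section maxv
variable {α : Type*} {f : α → ℝ} {A A' : Finset α}

lemma maxVal_nonneg (A : Finset α) (f : α → ℝ) : 0 ≤ maxVal A f :=
  (Finset.le_fold_max _).mpr (Or.inl le_rfl)

lemma le_maxVal {i : α} (hi : i ∈ A) : f i ≤ maxVal A f :=
  (Finset.le_fold_max _).mpr (Or.inr ⟨i, hi, le_rfl⟩)

lemma maxVal_le {c : ℝ} (h0 : 0 ≤ c) (h : ∀ i ∈ A, f i ≤ c) : maxVal A f ≤ c :=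
  (Finset.fold_max_le _).mpr ⟨h0, h⟩

lemma maxVal_mono (h : A ⊆ A') : maxVal A f ≤ maxVal A' f :=
  maxVal_le (maxVal_nonneg _ _) fun i hi => le_maxVal (h hi)

lemma maxVal_singleton (i : α) (hfi : 0 ≤ f i) : maxVal {i} f = f i := by
  unfold maxVal
  rw [Finset.fold_singleton]
  exact max_eq_left hfi

lemma maxVal_union_le [DecidableEq α] (hf : ∀ i, 0 ≤ f i) (B C : Finset α) :
    maxVal (B ∪ C) f ≤ (∑ i ∈ B, f i) + maxVal C f := by
  have hB : 0 ≤ ∑ i ∈ B, f i := Finset.sum_nonneg fun i _ => hf i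
  refine maxVal_le (add_nonneg hB (maxVal_nonneg C f)) fun i hi => ?_
  rcases Finset.mem_union.mp hi with h | h
  · have := Finset.single_le_sum (fun j (_ : j ∈ B) => hf j) h
    linarith [maxVal_nonneg C f]
  · linarith [le_maxVal (f := f) h]

end maxv
theorem stmt10 (d n : ℕ) (ε : ℝ) (hε0 : 0 ≤ ε) (hε1 : ε ≤ 1)
    (s : Fin n → EuclideanSpace ℝ (Fin d)) (p : Fin n → ℝ)
    (hp0 : ∀ i, 0 ≤ p i) (hp1 : ∀ i, p i ≤ 1)
    (f : Fin n → ℝ) (hf : ∀ i, 0 ≤ f i)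
    (O : Finset (Fin n)) (hO : (∑ i ∈ O, p i) ≤ ε) :
    (1 - ε) * (∑ i ∈ O, p i * f i) ≤
      expVal p (fun A => if (A ∩ O).Nonempty then maxVal A f else 0) ∧
    expVal p (fun A => if (A ∩ O).Nonempty then maxVal A f else 0) ≤
      (∑ i ∈ O, p i * f i) + ε * expVal p (fun A => maxVal A f) := by
  classical
  have hWnn : ∀ B, 0 ≤ wgt p O B := wgt_nonneg hp0 hp1 O
  have hVnn : ∀ C, 0 ≤ wgt p Oᶜ C := wgt_nonneg hp0 hp1 Oᶜ
  -- split form of the main expectation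
  have hE : expVal p (fun A => if (A ∩ O).Nonempty then maxVal A f else 0)
      = ∑ B ∈ O.powerset, ∑ C ∈ Oᶜ.powerset,
          wgt p O B * wgt p Oᶜ C * (if B.Nonempty then maxVal (B ∪ C) f else 0) := by
    rw [expVal_split O]
    refine Finset.sum_congr rfl fun B hB => Finset.sum_congr rfl fun C hC => ?_
    rw [union_inter_eq (Finset.mem_powerset.mp hB) (Finset.mem_powerset.mp hC)]
  -- collapsing the inner sum when the summand does not depend on C
  have collapse : ∀ t : Finset (Fin n) → ℝ,
      (∑ B ∈ O.powerset, ∑ C ∈ Oᶜ.powerset, wgt p O B * wgt p Oᶜ C * t B)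
        = ∑ B ∈ O.powerset, wgt p O B * t B := by
    intro t
    refine Finset.sum_congr rfl fun B _ => ?_
    calc ∑ C ∈ Oᶜ.powerset, wgt p O B * wgt p Oᶜ C * t B
        = (∑ C ∈ Oᶜ.powerset, wgt p Oᶜ C) * (wgt p O B * t B) := by
          rw [Finset.sum_mul]; exact Finset.sum_congr rfl fun C _ => by ring
      _ = wgt p O B * t B := by rw [sum_wgt]; ring
  constructor
  · -- lower bound
    have lower1 : ∑ B ∈ O.powerset, wgt p O B * (if B.Nonempty then maxVal B f else 0)
        ≤ expVal p (fun A => if (A ∩ O).Nonempty then maxVal A f else 0) := by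
      rw [hE]
      calc ∑ B ∈ O.powerset, wgt p O B * (if B.Nonempty then maxVal B f else 0)
          = ∑ B ∈ O.powerset, ∑ C ∈ Oᶜ.powerset,
              wgt p O B * wgt p Oᶜ C * (if B.Nonempty then maxVal B f else 0) :=
            (collapse _).symm
        _ ≤ _ := by
            refine Finset.sum_le_sum fun B _ => Finset.sum_le_sum fun C _ => ?_
            refine mul_le_mul_of_nonneg_left ?_ (mul_nonneg (hWnn B) (hVnn C))
            split
            · exact maxVal_mono Finset.subset_union_left
            · exact le_rfl
    have himg : (O.image fun i => ({i} : Finset (Fin n))) ⊆ O.powerset := by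
      intro B hB
      simp only [Finset.mem_image] at hB
      obtain ⟨i, hi, rfl⟩ := hB
      simpa [Finset.mem_powerset, Finset.singleton_subset_iff] using hi
    have hsum_img : ∑ B ∈ O.image (fun i => ({i} : Finset (Fin n))),
        wgt p O B * (if B.Nonempty then maxVal B f else 0)
        = ∑ i ∈ O, wgt p O {i} * maxVal {i} f := by
      rw [Finset.sum_image (fun a _ b _ h => Finset.singleton_injective h)]
      exact Finset.sum_congr rfl fun i _ => by simp [Finset.singleton_nonempty]
    have hstep : ∀ i ∈ O, (1 - ε) * (p i * f i) ≤ wgt p O {i} * maxVal {i} f := by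
      intro i hi
      rw [maxVal_singleton i (hf i)]
      have hw : wgt p O {i} = p i * ∏ j ∈ O \ {i}, (1 - p j) := by
        unfold wgt; simp
      have h1 : (1 - ε) ≤ ∏ j ∈ O \ {i}, (1 - p j) := by
        have h2 := one_sub_sum_le_prod_one_sub hp0 hp1 (O \ {i})
        have hsub : ∑ j ∈ O \ {i}, p j ≤ ε :=
          le_trans (Finset.sum_le_sum_of_subset_of_nonneg Finset.sdiff_subset
            (fun j _ _ => hp0 j)) hO
        linarith
      rw [hw]
      calc (1 - ε) * (p i * f i) ≤ (∏ j ∈ O \ {i}, (1 - p j)) * (p i * f i) :=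
            mul_le_mul_of_nonneg_right h1 (mul_nonneg (hp0 i) (hf i))
        _ = p i * (∏ j ∈ O \ {i}, (1 - p j)) * f i := by ring
    calc (1 - ε) * (∑ i ∈ O, p i * f i)
        = ∑ i ∈ O, (1 - ε) * (p i * f i) := Finset.mul_sum _ _ _
      _ ≤ ∑ i ∈ O, wgt p O {i} * maxVal {i} f := Finset.sum_le_sum hstep
      _ = ∑ B ∈ O.image (fun i => ({i} : Finset (Fin n))),
            wgt p O B * (if B.Nonempty then maxVal B f else 0) := hsum_img.symm
      _ ≤ ∑ B ∈ O.powerset, wgt p O B * (if B.Nonempty then maxVal B f else 0) := by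
          refine Finset.sum_le_sum_of_subset_of_nonneg himg fun B _ _ => ?_
          refine mul_nonneg (hWnn B) ?_
          split
          · exact maxVal_nonneg _ _
          · exact le_rfl
      _ ≤ _ := lower1
  · -- upper bound
    rw [hE]
    have step1 : ∑ B ∈ O.powerset, ∑ C ∈ Oᶜ.powerset,
          wgt p O B * wgt p Oᶜ C * (if B.Nonempty then maxVal (B ∪ C) f else 0)
        ≤ (∑ B ∈ O.powerset, ∑ C ∈ Oᶜ.powerset, wgt p O B * wgt p Oᶜ C * (∑ i ∈ B, f i))
          + ∑ B ∈ O.powerset, ∑ C ∈ Oᶜ.powerset,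
              wgt p O B * wgt p Oᶜ C * (if B.Nonempty then maxVal C f else 0) := by
      rw [← Finset.sum_add_distrib]
      refine Finset.sum_le_sum fun B _ => ?_
      rw [← Finset.sum_add_distrib]
      refine Finset.sum_le_sum fun C _ => ?_
      rw [← mul_add]
      refine mul_le_mul_of_nonneg_left ?_ (mul_nonneg (hWnn B) (hVnn C))
      have hB : 0 ≤ ∑ i ∈ B, f i := Finset.sum_nonneg fun i _ => hf i
      split
      · exact maxVal_union_le hf B C
      · linarith
    have t1 : (∑ B ∈ O.powerset, ∑ C ∈ Oᶜ.powerset,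
          wgt p O B * wgt p Oᶜ C * (∑ i ∈ B, f i)) = ∑ i ∈ O, p i * f i := by
      rw [collapse (fun B => ∑ i ∈ B, f i)]
      exact sum_wgt_mul p O f
    have t2 : (∑ B ∈ O.powerset, ∑ C ∈ Oᶜ.powerset,
          wgt p O B * wgt p Oᶜ C * (if B.Nonempty then maxVal C f else 0))
        = (∑ B ∈ O.powerset, (if B.Nonempty then wgt p O B else 0))
          * (∑ C ∈ Oᶜ.powerset, wgt p Oᶜ C * maxVal C f) := by
      rw [Finset.sum_mul_sum]
      refine Finset.sum_congr rfl fun B _ => Finset.sum_congr rfl fun C _ => ?_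
      by_cases hB : B.Nonempty <;> simp [hB] <;> ring
    have hbound1 : ∑ B ∈ O.powerset, (if B.Nonempty then wgt p O B else 0) ≤ ε := by
      rw [sum_wgt_nonempty]
      have := one_sub_sum_le_prod_one_sub hp0 hp1 O
      linarith
    have hbound1' : 0 ≤ ∑ B ∈ O.powerset, (if B.Nonempty then wgt p O B else 0) := by
      refine Finset.sum_nonneg fun B _ => ?_
      split
      · exact hWnn B
      · exact le_rfl
    have hbound2' : 0 ≤ ∑ C ∈ Oᶜ.powerset, wgt p Oᶜ C * maxVal C f :=
      Finset.sum_nonneg fun C _ => mul_nonneg (hVnn C) (maxVal_nonneg _ _)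
    have hbound2 : ∑ C ∈ Oᶜ.powerset, wgt p Oᶜ C * maxVal C f
        ≤ expVal p (fun A => maxVal A f) := by
      rw [expVal_split O (fun A => maxVal A f)]
      calc ∑ C ∈ Oᶜ.powerset, wgt p Oᶜ C * maxVal C f
          = ∑ B ∈ O.powerset, ∑ C ∈ Oᶜ.powerset,
              wgt p O B * wgt p Oᶜ C * maxVal C f := by
            rw [show (∑ B ∈ O.powerset, ∑ C ∈ Oᶜ.powerset,
                wgt p O B * wgt p Oᶜ C * maxVal C f)
              = (∑ B ∈ O.powerset, wgt p O B)
                * (∑ C ∈ Oᶜ.powerset, wgt p Oᶜ C * maxVal C f) from by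
                rw [Finset.sum_mul_sum]
                exact Finset.sum_congr rfl fun B _ => Finset.sum_congr rfl fun C _ => by ring]
            rw [sum_wgt, one_mul]
        _ ≤ _ := by
            refine Finset.sum_le_sum fun B _ => Finset.sum_le_sum fun C _ => ?_
            exact mul_le_mul_of_nonneg_left (maxVal_mono Finset.subset_union_right)
              (mul_nonneg (hWnn B) (hVnn C))
    have := mul_le_mul hbound1 hbound2 hbound2' hε0
    calc _ ≤ _ := step1
      _ = (∑ i ∈ O, p i * f i)
          + (∑ B ∈ O.powerset, (if B.Nonempty then wgt p O B else 0))
            * (∑ C ∈ Oᶜ.powerset, wgt p Oᶜ C * maxVal C f) := by rw [t1, t2]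
      _ ≤ (∑ i ∈ O, p i * f i) + ε * expVal p (fun A => maxVal A f) := by linarith
end

section
/- For every integer d ≥ 1 there is a constant C(d) > 0, depending only on d, such that for every k ≥ 1, every ε ∈ (0,1), and every nonempty finite set P ⊆ ℝ^d, there exists a subset S ⊆ P with |S| ≤ C(d)·k·ε^{−d} such that K(P,F) ≤ (1+ε)·K(S,F) for every k-point set F ⊆ ℝ^d; that is, P has an additive ε-coreset of size at most C(d)·k·ε^{−d}. -/
open Metric MeasureTheory
open scoped ENNReal NNReal


/-- The `k`-center value `K(P,F) = max_{s ∈ P} min_{f ∈ F} ‖s - f‖` (with `K(∅,F) = 0`). -/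
noncomputable def Kval {d : ℕ} (P F : Finset (EuclideanSpace ℝ (Fin d))) : ℝ :=
  maxVal P (fun x => Metric.infDist x (↑F : Set (EuclideanSpace ℝ (Fin d))))

section AuxForStmt15

lemma Kval_nonneg {d : ℕ} (P F : Finset (EuclideanSpace ℝ (Fin d))) : 0 ≤ Kval P F :=
  (Finset.le_fold_max _).mpr (Or.inl le_rfl)

lemma le_Kval {d : ℕ} {P F : Finset (EuclideanSpace ℝ (Fin d))} {x : EuclideanSpace ℝ (Fin d)}
    (hx : x ∈ P) : Metric.infDist x (↑F : Set (EuclideanSpace ℝ (Fin d))) ≤ Kval P F :=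
  (Finset.le_fold_max _).mpr (Or.inr ⟨x, hx, le_rfl⟩)

lemma Kval_le {d : ℕ} {P F : Finset (EuclideanSpace ℝ (Fin d))} {a : ℝ} (h0 : 0 ≤ a)
    (h : ∀ x ∈ P, Metric.infDist x (↑F : Set (EuclideanSpace ℝ (Fin d))) ≤ a) : Kval P F ≤ a :=
  (Finset.fold_max_le _).mpr ⟨h0, h⟩

lemma packing {d : ℕ} (hd : 1 ≤ d) (c : EuclideanSpace ℝ (Fin d))
    (T : Finset (EuclideanSpace ℝ (Fin d))) {δ R : ℝ} (hδ : 0 < δ) (hR : 0 < R)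
    (hT : ∀ x ∈ T, dist x c ≤ R)
    (hsep : ∀ x ∈ T, ∀ y ∈ T, x ≠ y → δ < dist x y) :
    (T.card : ℝ) ≤ (2 * R / δ + 1) ^ d := by
  haveI : Nonempty (Fin d) := ⟨⟨0, hd⟩⟩
  set μ : Measure (EuclideanSpace ℝ (Fin d)) := volume with hμ
  have hdisj : (↑T : Set (EuclideanSpace ℝ (Fin d))).PairwiseDisjoint
      (fun t => ball t (δ / 2)) := by
    intro x hx y hy hxy
    exact ball_disjoint_ball (by linarith [hsep x hx y hy hxy])
  have hsum : ∑ t ∈ T, μ (ball t (δ / 2)) = μ (⋃ t ∈ T, ball t (δ / 2)) :=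
    (measure_biUnion_finset hdisj fun t _ => measurableSet_ball).symm
  have hsub : (⋃ t ∈ T, ball t (δ / 2)) ⊆ ball c (R + δ / 2) := by
    intro z hz
    simp only [Set.mem_iUnion, mem_ball] at hz ⊢
    obtain ⟨t, ht, hzt⟩ := hz
    calc dist z c ≤ dist z t + dist t c := dist_triangle _ _ _
      _ < δ / 2 + R := by have := hT t ht; linarith
      _ = R + δ / 2 := by ring
  have h1 : (T.card : ℝ≥0∞) * μ (ball 0 (δ / 2)) ≤ μ (ball 0 (R + δ / 2)) := by
    calc (T.card : ℝ≥0∞) * μ (ball 0 (δ / 2)) = ∑ t ∈ T, μ (ball t (δ / 2)) := by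
          simp [Measure.addHaar_ball_center, Finset.sum_const, nsmul_eq_mul]
      _ = μ (⋃ t ∈ T, ball t (δ / 2)) := hsum
      _ ≤ μ (ball c (R + δ / 2)) := measure_mono hsub
      _ = μ (ball 0 (R + δ / 2)) := Measure.addHaar_ball_center μ c _
  rw [Measure.addHaar_ball _ _ (by positivity : (0:ℝ) ≤ δ / 2),
    Measure.addHaar_ball _ _ (by positivity : (0:ℝ) ≤ R + δ / 2),
    finrank_euclideanSpace_fin] at h1
  have hB0 : μ (ball (0 : EuclideanSpace ℝ (Fin d)) 1) ≠ 0 :=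
    (measure_ball_pos μ _ one_pos).ne'
  have hBtop : μ (ball (0 : EuclideanSpace ℝ (Fin d)) 1) ≠ ⊤ := measure_ball_lt_top.ne
  have h2 : (T.card : ℝ≥0∞) * ENNReal.ofReal ((δ / 2) ^ d) ≤
      ENNReal.ofReal ((R + δ / 2) ^ d) := by
    rw [← mul_assoc] at h1
    exact (ENNReal.mul_le_mul_iff_left hB0 hBtop).mp h1
  have h3 : (T.card : ℝ) * (δ / 2) ^ d ≤ (R + δ / 2) ^ d := by
    have := ENNReal.toReal_mono (by finiteness) h2
    rwa [ENNReal.toReal_mul, ENNReal.toReal_natCast,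
      ENNReal.toReal_ofReal (by positivity), ENNReal.toReal_ofReal (by positivity)] at this
  have hpow : (0:ℝ) < (δ / 2) ^ d := by positivity
  calc (T.card : ℝ) ≤ (R + δ / 2) ^ d / (δ / 2) ^ d := (le_div_iff₀ hpow).mpr h3
    _ = ((R + δ / 2) / (δ / 2)) ^ d := (div_pow _ _ _).symm
    _ = (2 * R / δ + 1) ^ d := by rw [show (R + δ / 2) / (δ / 2) = 2 * R / δ + 1 by
          field_simp]

end AuxForStmt15

/-- Every finite point set in `ℝ^d` has an additive `ε`-coreset for `k`-center
of size at most `C(d)·k·ε^{-d}`. -/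
theorem stmt15 :
    ∀ d : ℕ, 1 ≤ d →
      ∃ C : ℝ, 0 < C ∧
        ∀ (k : ℕ) (ε : ℝ) (P : Finset (EuclideanSpace ℝ (Fin d))),
          1 ≤ k → 0 < ε → ε < 1 → P.Nonempty →
          ∃ S ⊆ P, ((S.card : ℝ) ≤ C * k * ε⁻¹ ^ d) ∧
            ∀ F : Finset (EuclideanSpace ℝ (Fin d)), F.card = k →
              Kval P F ≤ (1 + ε) * Kval S F := by
  intro d hd
  classical
  refine ⟨9 ^ d, by positivity, ?_⟩
  intro k ε P hk hε hε1 hP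
  have hεinv : (1:ℝ) ≤ ε⁻¹ := one_le_inv_iff₀.mpr ⟨hε, hε1.le⟩
  have hεpow : (1:ℝ) ≤ ε⁻¹ ^ d := one_le_pow₀ hεinv
  -- candidate center sets inside P
  set 𝒞 : Finset (Finset (EuclideanSpace ℝ (Fin d))) :=
    P.powerset.filter (fun F' => F'.Nonempty ∧ F'.card ≤ k) with h𝒞
  have h𝒞ne : 𝒞.Nonempty := by
    obtain ⟨p, hp⟩ := hP
    refine ⟨{p}, ?_⟩
    simp [h𝒞, Finset.singleton_subset_iff, hp, hk]
  obtain ⟨F₀, hF₀mem, hF₀min⟩ := Finset.exists_min_image 𝒞 (fun F' => Kval P F') h𝒞ne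
  rw [h𝒞, Finset.mem_filter, Finset.mem_powerset] at hF₀mem
  obtain ⟨hF₀P, hF₀ne, hF₀k⟩ := hF₀mem
  set r := Kval P F₀ with hr
  have hr0 : 0 ≤ r := Kval_nonneg _ _
  -- r is at most twice the k-center value of any k-point set
  have key : ∀ F : Finset (EuclideanSpace ℝ (Fin d)), F.card = k → r ≤ 2 * Kval P F := by
    intro F hFk
    have hFne : F.Nonempty := Finset.card_pos.mp (by omega)
    choose g hg1 hg2 using fun f : EuclideanSpace ℝ (Fin d) =>
      P.exists_min_image (fun q => dist q f) hP
    have hF'𝒞 : F.image g ∈ 𝒞 := by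
      rw [h𝒞, Finset.mem_filter, Finset.mem_powerset]
      refine ⟨fun x hx => ?_, hFne.image g, le_trans Finset.card_image_le (le_of_eq hFk)⟩
      obtain ⟨f, _, rfl⟩ := Finset.mem_image.mp hx
      exact hg1 f
    have h2 : Kval P (F.image g) ≤ 2 * Kval P F := by
      apply Kval_le (by linarith [Kval_nonneg P F])
      intro p hp
      obtain ⟨f, hf, hdf⟩ := (F.finite_toSet.isCompact).exists_infDist_eq_dist
        (Finset.coe_nonempty.mpr hFne) p
      calc Metric.infDist p (↑(F.image g) : Set (EuclideanSpace ℝ (Fin d)))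
          ≤ dist p (g f) := Metric.infDist_le_dist_of_mem
            (by exact_mod_cast Finset.mem_image_of_mem g hf)
        _ ≤ dist p f + dist f (g f) := dist_triangle _ _ _
        _ ≤ dist p f + dist p f := by
            have := hg2 f p hp
            rw [dist_comm f (g f)]; linarith
        _ = 2 * Metric.infDist p (↑F : Set (EuclideanSpace ℝ (Fin d))) := by rw [hdf]; ring
        _ ≤ 2 * Kval P F := by linarith [le_Kval (F := F) hp]
    exact le_trans (hF₀min _ hF'𝒞) h2
  rcases hr0.eq_or_lt with hrz | hrpos
  · -- r = 0 : P itself has at most k points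
    have hPF₀ : P ⊆ F₀ := by
      intro p hp
      have h1 : Metric.infDist p (↑F₀ : Set (EuclideanSpace ℝ (Fin d))) ≤ 0 :=
        hrz ▸ le_Kval hp
      have h2 : Metric.infDist p (↑F₀ : Set (EuclideanSpace ℝ (Fin d))) = 0 :=
        le_antisymm h1 Metric.infDist_nonneg
      exact_mod_cast (F₀.finite_toSet.isClosed.mem_iff_infDist_zero
        (Finset.coe_nonempty.mpr hF₀ne)).mpr h2
    refine ⟨P, subset_rfl, ?_, ?_⟩
    · have h1 : (P.card : ℝ) ≤ k := by
        exact_mod_cast le_trans (Finset.card_le_card hPF₀) hF₀k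
      have h2 : (1:ℝ) ≤ 9 ^ d := one_le_pow₀ (by norm_num)
      have hk' : (0:ℝ) ≤ k := Nat.cast_nonneg k
      have h3 : (1:ℝ) ≤ 9 ^ d * ε⁻¹ ^ d := by nlinarith
      nlinarith
    · intro F hF
      nlinarith [Kval_nonneg P F]
  · -- r > 0 : take a maximal δ-separated subset
    set δ : ℝ := ε / 4 * r with hδdef
    have hδ0 : 0 < δ := by positivity
    set 𝒮 : Finset (Finset (EuclideanSpace ℝ (Fin d))) :=
      P.powerset.filter (fun S => ∀ x ∈ S, ∀ y ∈ S, x ≠ y → δ < dist x y) with h𝒮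
    have h𝒮ne : 𝒮.Nonempty := ⟨∅, by simp [h𝒮]⟩
    obtain ⟨S, hSmem, hSmax⟩ := Finset.exists_max_image 𝒮 Finset.card h𝒮ne
    rw [h𝒮, Finset.mem_filter, Finset.mem_powerset] at hSmem
    obtain ⟨hSP, hSsep⟩ := hSmem
    have hcover : ∀ p ∈ P, ∃ s ∈ S, dist p s ≤ δ := by
      intro p hp
      by_contra hcon
      push_neg at hcon
      have hpS : p ∉ S := fun hps => absurd (hcon p hps) (by simpa using hδ0.le)
      have hins : insert p S ∈ 𝒮 := by
        rw [h𝒮, Finset.mem_filter, Finset.mem_powerset]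
        refine ⟨Finset.insert_subset hp hSP, ?_⟩
        intro x hx y hy hxy
        rcases Finset.mem_insert.mp hx with rfl | hx' <;>
          rcases Finset.mem_insert.mp hy with rfl | hy'
        · exact absurd rfl hxy
        · exact hcon y hy'
        · rw [dist_comm]; exact hcon x hx'
        · exact hSsep x hx' y hy' hxy
      have := hSmax _ hins
      rw [Finset.card_insert_of_notMem hpS] at this
      omega
    refine ⟨S, hSP, ?_, ?_⟩
    · -- cardinality bound
      have hballs : S ⊆ F₀.biUnion (fun f => S.filter (fun s => dist s f ≤ r)) := by
        intro s hs
        have h1 : Metric.infDist s (↑F₀ : Set (EuclideanSpace ℝ (Fin d))) ≤ r :=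
          le_Kval (hSP hs)
        obtain ⟨f, hf, hdf⟩ := (F₀.finite_toSet.isCompact).exists_infDist_eq_dist
          (Finset.coe_nonempty.mpr hF₀ne) s
        exact Finset.mem_biUnion.mpr ⟨f, hf, Finset.mem_filter.mpr ⟨hs, by rw [← hdf]; exact h1⟩⟩
      have hup : ∀ f ∈ F₀, ((S.filter (fun s => dist s f ≤ r)).card : ℝ) ≤ 9 ^ d * ε⁻¹ ^ d := by
        intro f _
        have hpack := packing hd f (S.filter (fun s => dist s f ≤ r)) hδ0 hrpos
          (fun x hx => (Finset.mem_filter.mp hx).2)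
          (fun x hx y hy hxy =>
            hSsep x (Finset.mem_filter.mp hx).1 y (Finset.mem_filter.mp hy).1 hxy)
        have hrw : 2 * r / δ + 1 = 8 / ε + 1 := by
          rw [hδdef]; field_simp; ring
        have hle : (8 / ε + 1 : ℝ) ≤ 9 * ε⁻¹ := by
          rw [div_eq_mul_inv]
          nlinarith
        calc ((S.filter (fun s => dist s f ≤ r)).card : ℝ)
            ≤ (2 * r / δ + 1) ^ d := hpack
          _ = (8 / ε + 1) ^ d := by rw [hrw]
          _ ≤ (9 * ε⁻¹) ^ d := pow_le_pow_left₀ (by positivity) hle d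
          _ = 9 ^ d * ε⁻¹ ^ d := mul_pow _ _ _
      calc (S.card : ℝ)
          ≤ ((F₀.biUnion (fun f => S.filter (fun s => dist s f ≤ r))).card : ℝ) := by
            exact_mod_cast Finset.card_le_card hballs
        _ ≤ ∑ f ∈ F₀, ((S.filter (fun s => dist s f ≤ r)).card : ℝ) := by
            exact_mod_cast Finset.card_biUnion_le
        _ ≤ ∑ _f ∈ F₀, (9 ^ d * ε⁻¹ ^ d : ℝ) := Finset.sum_le_sum hup
        _ = (F₀.card : ℝ) * (9 ^ d * ε⁻¹ ^ d) := by
            rw [Finset.sum_const, nsmul_eq_mul]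
        _ ≤ (k : ℝ) * (9 ^ d * ε⁻¹ ^ d) := by
            have h4 : (F₀.card : ℝ) ≤ k := by exact_mod_cast hF₀k
            exact mul_le_mul_of_nonneg_right h4 (by positivity)
        _ = 9 ^ d * k * ε⁻¹ ^ d := by ring
    · -- approximation property
      intro F hF
      have hKP0 := Kval_nonneg P F
      have hKS0 := Kval_nonneg S F
      have hrF := key F hF
      have main : Kval P F ≤ Kval S F + δ := by
        apply Kval_le (by linarith)
        intro p hp
        obtain ⟨s, hs, hps⟩ := hcover p hp
        calc Metric.infDist p (↑F : Set (EuclideanSpace ℝ (Fin d)))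
            ≤ Metric.infDist s (↑F : Set (EuclideanSpace ℝ (Fin d))) + dist p s :=
              Metric.infDist_le_infDist_add_dist
          _ ≤ Kval S F + δ := add_le_add (le_Kval hs) hps
      have hδle : δ ≤ ε / 2 * Kval P F := by
        rw [hδdef]; nlinarith
      nlinarith
end
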